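/- arXiv:2305.18268 — 3 statements merged into one kernel-verified Lean document; each statement's English description precedes it below -/
import Mathlib

section
/- Let P_1,…,P_ℓ and P'_1,…,P'_ℓ be transition matrices reversible with respect to π (not necessarily irreducible), let a_k > 0 with Σ_k a_k = 1, and set P = Σ_k a_k P_k and P' = Σ_k a_k P'_k. If P and P' are irreducible and for each k the matrix P_k − P'_k has all eigenvalues non-negative, then P' efficiency-dominates P. -/
open Matrix BigOperators Filter

def IsStochastic {n : ℕ} (P : Matrix (Fin n) (Fin n) ℝ) : Prop :=
  (∀ x y, 0 ≤ P x y) ∧ ∀ x, ∑ y, P x y = 1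

def IsReversible {n : ℕ} (π : Fin n → ℝ) (P : Matrix (Fin n) (Fin n) ℝ) : Prop :=
  ∀ x y, π x * P x y = π y * P y x

def MatIrreducible {n : ℕ} (P : Matrix (Fin n) (Fin n) ℝ) : Prop :=
  ∀ x y, ∃ k : ℕ, 0 < (P ^ k) x y

noncomputable def pInner {n : ℕ} (π f g : Fin n → ℝ) : ℝ := ∑ x, f x * g x * π x

noncomputable def autocov {n : ℕ} (π : Fin n → ℝ) (P : Matrix (Fin n) (Fin n) ℝ)
    (f : Fin n → ℝ) (k : ℕ) : ℝ :=
  ∑ x, ∑ y, π x * (f x - ∑ z, π z * f z) * (P ^ k) x y * (f y - ∑ z, π z * f z)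

noncomputable def varN {n : ℕ} (π : Fin n → ℝ) (P : Matrix (Fin n) (Fin n) ℝ)
    (f : Fin n → ℝ) (N : ℕ) : ℝ :=
  ((N : ℝ))⁻¹ * ∑ i ∈ Finset.range N, ∑ j ∈ Finset.range N,
    autocov π P f (max i j - min i j)

def HasAsymptVar {n : ℕ} (π : Fin n → ℝ) (P : Matrix (Fin n) (Fin n) ℝ)
    (f : Fin n → ℝ) (v : ℝ) : Prop :=
  Tendsto (varN π P f) atTop (nhds v)

def EffDom {n : ℕ} (π : Fin n → ℝ) (P Q : Matrix (Fin n) (Fin n) ℝ) : Prop :=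
  ∀ (f : Fin n → ℝ) (vP vQ : ℝ),
    HasAsymptVar π P f vP → HasAsymptVar π Q f vQ → vP ≤ vQ

namespace Stmt10Aux

variable {n : ℕ}


noncomputable def evec {A : Matrix (Fin n) (Fin n) ℝ} (hA : A.IsHermitian) (e : Fin n) :
    Fin n → ℝ := ⇑(hA.eigenvectorBasis e)

lemma evec_dot {A : Matrix (Fin n) (Fin n) ℝ} (hA : A.IsHermitian) (e e' : Fin n) :
    evec hA e ⬝ᵥ evec hA e' = if e = e' then 1 else 0 := by
  have h := hA.eigenvectorBasis.orthonormal
  rw [orthonormal_iff_ite] at h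
  have := h e e'
  simpa [PiLp.inner_apply, dotProduct, evec, mul_comm] using this

lemma evec_sum_repr {A : Matrix (Fin n) (Fin n) ℝ} (hA : A.IsHermitian) (x : Fin n → ℝ) :
    ∑ e, (evec hA e ⬝ᵥ x) • evec hA e = x := by
  have := hA.eigenvectorBasis.sum_repr' (WithLp.toLp 2 x : EuclideanSpace ℝ (Fin n))
  have h2 : ∀ e, (inner ℝ (hA.eigenvectorBasis e) (WithLp.toLp 2 x : EuclideanSpace ℝ (Fin n)) : ℝ)
      = evec hA e ⬝ᵥ x := by
    intro e; simp [PiLp.inner_apply, dotProduct, evec, mul_comm]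
  calc ∑ e, (evec hA e ⬝ᵥ x) • evec hA e
      = ∑ e, (inner ℝ (hA.eigenvectorBasis e) (WithLp.toLp 2 x : EuclideanSpace ℝ (Fin n)) : ℝ) • evec hA e := by
        simp_rw [h2]
    _ = x := by simpa [evec, WithLp.ofLp_sum, WithLp.ofLp_smul] using congrArg WithLp.ofLp this

lemma evec_parseval {A : Matrix (Fin n) (Fin n) ℝ} (hA : A.IsHermitian) (x y : Fin n → ℝ) :
    x ⬝ᵥ y = ∑ e, (evec hA e ⬝ᵥ x) * (evec hA e ⬝ᵥ y) := by
  set X : EuclideanSpace ℝ (Fin n) := WithLp.toLp 2 x with hX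
  set Y : EuclideanSpace ℝ (Fin n) := WithLp.toLp 2 y with hY
  have := hA.eigenvectorBasis.sum_inner_mul_inner X Y
  have h2 : ∀ e, (inner ℝ X (hA.eigenvectorBasis e) : ℝ) = evec hA e ⬝ᵥ x := by
    intro e; simp [PiLp.inner_apply, dotProduct, evec, hX, mul_comm]
  have h3 : ∀ e, (inner ℝ (hA.eigenvectorBasis e) Y : ℝ) = evec hA e ⬝ᵥ y := by
    intro e; simp [PiLp.inner_apply, dotProduct, evec, hY, mul_comm]
  have h4 : (inner ℝ X Y : ℝ) = x ⬝ᵥ y := by simp [PiLp.inner_apply, dotProduct, hX, hY, mul_comm]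
  rw [← h4, ← this]
  exact Finset.sum_congr rfl fun e _ => by rw [h2, h3]

lemma evec_mulVec {A : Matrix (Fin n) (Fin n) ℝ} (hA : A.IsHermitian) (e : Fin n) :
    A.mulVec (evec hA e) = hA.eigenvalues e • evec hA e :=
  hA.mulVec_eigenvectorBasis e



noncomputable def symm (π : Fin n → ℝ) (P : Matrix (Fin n) (Fin n) ℝ) :
    Matrix (Fin n) (Fin n) ℝ :=
  Matrix.of fun x y => Real.sqrt (π x) * P x y / Real.sqrt (π y)

lemma sqrt_pos' {π : Fin n → ℝ} (hπpos : ∀ x, 0 < π x) (x : Fin n) :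
    0 < Real.sqrt (π x) := Real.sqrt_pos.2 (hπpos x)

lemma symm_isHermitian {π : Fin n → ℝ} {P : Matrix (Fin n) (Fin n) ℝ}
    (hπpos : ∀ x, 0 < π x) (hrev : ∀ x y, π x * P x y = π y * P y x) :
    (symm π P).IsHermitian := by
  rw [Matrix.IsHermitian, Matrix.conjTranspose_eq_transpose_of_trivial]
  ext x y
  have hx := sqrt_pos' hπpos x
  have hy := sqrt_pos' hπpos y
  have hx2 : Real.sqrt (π x) * Real.sqrt (π x) = π x := Real.mul_self_sqrt (hπpos x).le
  have hy2 : Real.sqrt (π y) * Real.sqrt (π y) = π y := Real.mul_self_sqrt (hπpos y).le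
  simp only [Matrix.transpose_apply, symm, Matrix.of_apply]
  field_simp
  linear_combination P y x * hy2 - P x y * hx2 + hrev y x

lemma symm_pow {π : Fin n → ℝ} (hπpos : ∀ x, 0 < π x) (P : Matrix (Fin n) (Fin n) ℝ)
    (k : ℕ) (x y : Fin n) :
    ((symm π P) ^ k) x y = Real.sqrt (π x) * (P ^ k) x y / Real.sqrt (π y) := by
  induction k generalizing y with
  | zero =>
    by_cases h : x = y
    · subst h
      simp [Matrix.one_apply, mul_div_assoc, div_self (sqrt_pos' hπpos x).ne']
    · simp [Matrix.one_apply, h]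
  | succ k ih =>
    rw [pow_succ, pow_succ, Matrix.mul_apply, Matrix.mul_apply, Finset.mul_sum,
      Finset.sum_div]
    refine Finset.sum_congr rfl fun z _ => ?_
    rw [ih z]
    have hz := (sqrt_pos' hπpos z).ne'
    simp only [symm, Matrix.of_apply]
    have h1 : Real.sqrt (π z) * P z y / Real.sqrt (π y)
        = P z y / Real.sqrt (π y) * Real.sqrt (π z) := by ring
    rw [h1, ← mul_assoc, div_mul_eq_mul_div, div_mul_eq_mul_div, mul_div_assoc _ (Real.sqrt (π z)) (Real.sqrt (π z)), div_self hz, mul_one]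
    ring

lemma eig_transfer {π : Fin n → ℝ} (hπpos : ∀ x, 0 < π x) {P : Matrix (Fin n) (Fin n) ℝ}
    {μ : ℝ} {u : Fin n → ℝ} (hu : (symm π P).mulVec u = μ • u) :
    P.mulVec (fun x => u x / Real.sqrt (π x)) = μ • (fun x => u x / Real.sqrt (π x)) := by
  funext x
  have hx := sqrt_pos' hπpos x
  have h := congrFun hu x
  simp only [Matrix.mulVec, dotProduct, symm, Matrix.of_apply, Pi.smul_apply,
    smul_eq_mul] at h ⊢
  have : ∑ y, P x y * (u y / Real.sqrt (π y))
      = (∑ y, Real.sqrt (π x) * P x y / Real.sqrt (π y) * u y) / Real.sqrt (π x) := by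
    rw [Finset.sum_div]
    refine Finset.sum_congr rfl fun y _ => ?_
    have hy := (sqrt_pos' hπpos y).ne'
    field_simp
  rw [this, h]
  field_simp

lemma eig_vec_ne {π : Fin n → ℝ} (hπpos : ∀ x, 0 < π x) {u : Fin n → ℝ} (hu : u ≠ 0) :
    (fun x => u x / Real.sqrt (π x)) ≠ 0 := by
  intro h
  apply hu
  funext x
  have := congrFun h x
  have hx := sqrt_pos' hπpos x
  simpa [div_eq_zero_iff, hx.ne', hx.not_gt] using this


section CFacts


lemma stoch_pow {P : Matrix (Fin n) (Fin n) ℝ} (hP : IsStochastic P) (k : ℕ) :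
    IsStochastic (P ^ k) := by
  induction k with
  | zero =>
    constructor
    · intro x y; by_cases h : x = y <;> simp [Matrix.one_apply, h]
    · intro x; simp [Matrix.one_apply]
  | succ k ih =>
    constructor
    · intro x y
      rw [pow_succ, Matrix.mul_apply]
      exact Finset.sum_nonneg fun z _ => mul_nonneg (ih.1 x z) (hP.1 z y)
    · intro x
      rw [pow_succ]
      simp only [Matrix.mul_apply]
      rw [Finset.sum_comm]
      calc ∑ z, ∑ y, (P ^ k) x z * P z y = ∑ z, (P ^ k) x z * ∑ y, P z y := by
            simp [Finset.mul_sum]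
        _ = 1 := by simp [hP.2, ih.2 x]

lemma perron_const {P : Matrix (Fin n) (Fin n) ℝ} (hP : IsStochastic P)
    (hirr : MatIrreducible P) {v : Fin n → ℝ} (hv : P.mulVec v = v) (x y : Fin n) :
    v x = v y := by
  have hne : (Finset.univ : Finset (Fin n)).Nonempty := ⟨x, Finset.mem_univ x⟩
  obtain ⟨x0, -, hx0⟩ := Finset.exists_max_image Finset.univ v hne
  -- one step
  have step : ∀ z, v z = v x0 → ∀ w, 0 < P z w → v w = v x0 := by
    intro z hz w hPzw
    have hsum : ∑ w, P z w * (v x0 - v w) = 0 := by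
      have h1 : ∑ w, P z w * v w = v z := congrFun hv z
      have h2 : ∑ w, P z w * v x0 = v x0 := by
        rw [← Finset.sum_mul, hP.2 z, one_mul]
      simp only [mul_sub]
      rw [Finset.sum_sub_distrib, h1, h2, hz, sub_self]
    have hnn : ∀ w ∈ Finset.univ, 0 ≤ P z w * (v x0 - v w) := fun w _ =>
      mul_nonneg (hP.1 z w) (sub_nonneg.2 (hx0 w (Finset.mem_univ w)))
    have := (Finset.sum_eq_zero_iff_of_nonneg hnn).1 hsum w (Finset.mem_univ w)
    rcases mul_eq_zero.1 this with h | h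
    · exact absurd h hPzw.ne'
    · linarith [sub_eq_zero.1 h]
  -- powers
  have main : ∀ k w, 0 < (P ^ k) x0 w → v w = v x0 := by
    intro k
    induction k with
    | zero =>
      intro w hw
      by_cases h : x0 = w
      · rw [← h]
      · simp [Matrix.one_apply, h] at hw
    | succ k ih =>
      intro w hw
      rw [pow_succ, Matrix.mul_apply] at hw
      have : ∃ z, 0 < (P ^ k) x0 z * P z w := by
        by_contra hcon
        push_neg at hcon
        have : ∑ z, (P ^ k) x0 z * P z w ≤ 0 := Finset.sum_nonpos fun z _ => hcon z
        linarith
      obtain ⟨z, hz⟩ := this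
      have h1 : 0 < (P ^ k) x0 z := by
        rcases lt_or_ge 0 ((P ^ k) x0 z) with h | h
        · exact h
        · nlinarith [(stoch_pow hP k).1 x0 z, hP.1 z w]
      have h2 : 0 < P z w := by
        nlinarith [(stoch_pow hP k).1 x0 z]
      exact step z (ih z h1) w h2
  have hx' : v x = v x0 := by obtain ⟨k, hk⟩ := hirr x0 x; exact main k x hk
  have hy' : v y = v x0 := by obtain ⟨k, hk⟩ := hirr x0 y; exact main k y hk
  rw [hx', hy']

lemma eig_abs_le_one {P : Matrix (Fin n) (Fin n) ℝ} (hP : IsStochastic P)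
    {μ : ℝ} {v : Fin n → ℝ} (hv : P.mulVec v = μ • v) (hvne : v ≠ 0) : |μ| ≤ 1 := by
  have hne : (Finset.univ : Finset (Fin n)).Nonempty := by
    rcases Function.ne_iff.1 hvne with ⟨x, -⟩
    exact ⟨x, Finset.mem_univ x⟩
  obtain ⟨x0, -, hx0⟩ := Finset.exists_max_image Finset.univ (fun x => |v x|) hne
  have hpos : 0 < |v x0| := by
    rcases Function.ne_iff.1 hvne with ⟨x, hx⟩
    have := hx0 x (Finset.mem_univ x)
    have : 0 < |v x| := abs_pos.2 (by simpa using hx)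
    linarith [hx0 x (Finset.mem_univ x)]
  have key : |μ| * |v x0| ≤ |v x0| := by
    have h1 : μ * v x0 = ∑ y, P x0 y * v y := (congrFun hv x0).symm
    calc |μ| * |v x0| = |μ * v x0| := (abs_mul μ (v x0)).symm
      _ = |∑ y, P x0 y * v y| := by rw [h1]
      _ ≤ ∑ y, |P x0 y * v y| := Finset.abs_sum_le_sum_abs _ _
      _ ≤ ∑ y, P x0 y * |v x0| := by
          refine Finset.sum_le_sum fun y _ => ?_
          rw [abs_mul, abs_of_nonneg (hP.1 x0 y)]
          exact mul_le_mul_of_nonneg_left (hx0 y (Finset.mem_univ y)) (hP.1 x0 y)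
      _ = |v x0| := by rw [← Finset.sum_mul, hP.2 x0, one_mul]
  exact le_of_mul_le_mul_right (by linarith) hpos
end CFacts


lemma tid (l : ℝ) (hl : l ≠ 1) (N : ℕ) :
    ∑ i ∈ Finset.range N, ∑ j ∈ Finset.range N, l ^ (max i j - min i j)
      = N * ((1 + l) / (1 - l)) - 2 * l * (1 - l ^ N) / (1 - l) ^ 2 := by
  have h1 : (1 : ℝ) - l ≠ 0 := sub_ne_zero.2 (Ne.symm hl)
  induction N with
  | zero => simp
  | succ N ih =>
    have hrow : ∀ i ∈ Finset.range N, l ^ (max i N - min i N) = l ^ (N - i) := by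
      intro i hi
      have h := Finset.mem_range.1 hi
      rw [Nat.max_eq_right h.le, Nat.min_eq_left h.le]
    have hgeom : ∑ i ∈ Finset.range N, l ^ (N - i) = l * ((l ^ N - 1) / (l - 1)) := by
      have := Finset.sum_range_reflect (fun i => l ^ (i + 1)) N
      have h2 : ∀ i ∈ Finset.range N, l ^ (N - 1 - i + 1) = l ^ (N - i) := by
        intro i hi
        have h := Finset.mem_range.1 hi
        congr 1
        omega
      rw [Finset.sum_congr rfl h2] at this
      rw [this]
      have : ∑ i ∈ Finset.range N, l ^ (i + 1) = l * ∑ i ∈ Finset.range N, l ^ i := by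
        rw [Finset.mul_sum]
        exact Finset.sum_congr rfl fun i _ => by ring
      rw [this, geom_sum_eq hl]
    rw [Finset.sum_range_succ]
    have hinner : ∀ i, ∑ j ∈ Finset.range (N + 1), l ^ (max i j - min i j)
        = (∑ j ∈ Finset.range N, l ^ (max i j - min i j)) + l ^ (max i N - min i N) :=
      fun i => Finset.sum_range_succ _ _
    simp only [hinner]
    have hrow2 : ∀ j ∈ Finset.range N, l ^ (max N j - min N j) = l ^ (N - j) := by
      intro j hj
      have h := Finset.mem_range.1 hj
      rw [Nat.max_eq_left h.le, Nat.min_eq_right h.le]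
    rw [Finset.sum_add_distrib, ih, Finset.sum_congr rfl hrow, hgeom,
      Finset.sum_congr rfl hrow2, hgeom]
    simp only [max_self, min_self, Nat.sub_self, pow_zero]
    push_cast
    have h3 : l - 1 ≠ 0 := sub_ne_zero.2 hl
    field_simp
    ring

lemma wlim {l : ℝ} (hl1 : -1 ≤ l) (hl2 : l < 1) :
    Tendsto (fun N : ℕ => ((N : ℝ))⁻¹ *
        ∑ i ∈ Finset.range N, ∑ j ∈ Finset.range N, l ^ (max i j - min i j))
      atTop (nhds ((1 + l) / (1 - l))) := by
  have h1 : (1 : ℝ) - l ≠ 0 := sub_ne_zero.2 (ne_of_gt (by linarith))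
  have habs : |l| ≤ 1 := abs_le.2 ⟨hl1, hl2.le⟩
  set C : ℝ := 4 / (1 - l) ^ 2 with hC
  have hb : Tendsto (fun N : ℕ => ((N : ℝ))⁻¹ * (2 * l * (1 - l ^ N) / (1 - l) ^ 2))
      atTop (nhds 0) := by
    refine squeeze_zero_norm (a := fun N : ℕ => ((N : ℝ))⁻¹ * C) ?_ ?_
    · intro N
      rw [norm_mul, norm_inv]
      have hN : ‖((N : ℝ))‖ = (N : ℝ) := by simp
      rw [hN]
      apply mul_le_mul_of_nonneg_left _ (by positivity)
      rw [norm_div, norm_mul, norm_mul]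
      have h4 : ‖(1 : ℝ) - l ^ N‖ ≤ 2 := by
        have : |l ^ N| ≤ 1 := by rw [abs_pow]; exact pow_le_one₀ (abs_nonneg l) habs
        rw [Real.norm_eq_abs]
        calc |1 - l ^ N| ≤ |(1:ℝ)| + |l ^ N| := abs_sub _ _
          _ ≤ 2 := by rw [abs_one]; linarith
      have h5 : ‖(1 - l) ^ 2‖ = (1 - l) ^ 2 := by
        rw [Real.norm_eq_abs, abs_of_pos (by positivity)]
      rw [h5, hC]
      rw [div_le_div_iff₀ (by positivity) (by positivity)]
      have h6 : ‖(2 : ℝ)‖ = 2 := by norm_num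
      have h7 : ‖l‖ ≤ 1 := by rwa [Real.norm_eq_abs]
      have h8 : (0:ℝ) < (1-l)^2 := by positivity
      have h9 : ‖(2:ℝ)‖ * ‖l‖ * ‖1 - l ^ N‖ ≤ 2 * 1 * 2 := by
        have := norm_nonneg l
        have := norm_nonneg ((1:ℝ) - l ^ N)
        rw [h6]
        nlinarith
      nlinarith
    · have : Tendsto (fun N : ℕ => ((N : ℝ))⁻¹) atTop (nhds 0) :=
        tendsto_inv_atTop_zero.comp tendsto_natCast_atTop_atTop
      simpa using this.mul_const C
  have heq : ∀ᶠ N : ℕ in atTop, (1 + l) / (1 - l) - ((N : ℝ))⁻¹ * (2 * l * (1 - l ^ N) / (1 - l) ^ 2)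
      = ((N : ℝ))⁻¹ * ∑ i ∈ Finset.range N, ∑ j ∈ Finset.range N, l ^ (max i j - min i j) := by
    filter_upwards [eventually_ge_atTop 1] with N hN
    rw [tid l (ne_of_lt hl2)]
    have hNne : ((N : ℝ)) ≠ 0 := Nat.cast_ne_zero.2 (by omega)
    field_simp
  have := (tendsto_const_nhds (x := (1 + l) / (1 - l)) (f := atTop (α := ℕ))).sub hb
  rw [sub_zero] at this
  exact this.congr' heq


lemma evec_ne_zero {A : Matrix (Fin n) (Fin n) ℝ} (hA : A.IsHermitian) (e : Fin n) :
    evec hA e ≠ 0 := by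
  intro h
  have := evec_dot hA e e
  rw [h] at this
  simp at this

lemma coord_mulVec {A : Matrix (Fin n) (Fin n) ℝ} (hA : A.IsHermitian) (e : Fin n)
    (x : Fin n → ℝ) :
    evec hA e ⬝ᵥ A.mulVec x = hA.eigenvalues e * (evec hA e ⬝ᵥ x) := by
  have hAT : Aᵀ = A := by
    have := hA
    rwa [Matrix.IsHermitian, Matrix.conjTranspose_eq_transpose_of_trivial] at this
  rw [Matrix.dotProduct_mulVec]
  have h : A *ᵥ evec hA e = evec hA e ᵥ* A := by
    have h0 := (Matrix.vecMul_transpose A (evec hA e)).symm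
    rwa [hAT] at h0
  rw [← h, evec_mulVec]
  simp [smul_dotProduct]

lemma coord_pow_mulVec {A : Matrix (Fin n) (Fin n) ℝ} (hA : A.IsHermitian) (e : Fin n)
    (x : Fin n → ℝ) (k : ℕ) :
    evec hA e ⬝ᵥ (A ^ k).mulVec x = hA.eigenvalues e ^ k * (evec hA e ⬝ᵥ x) := by
  induction k with
  | zero => simp [Matrix.one_mulVec]
  | succ k ih =>
    rw [pow_succ', ← Matrix.mulVec_mulVec, coord_mulVec, ih, pow_succ]
    ring

lemma quad_pow {A : Matrix (Fin n) (Fin n) ℝ} (hA : A.IsHermitian) (x : Fin n → ℝ) (k : ℕ) :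
    x ⬝ᵥ (A ^ k).mulVec x = ∑ e, hA.eigenvalues e ^ k * (evec hA e ⬝ᵥ x) ^ 2 := by
  rw [evec_parseval hA]
  refine Finset.sum_congr rfl fun e _ => ?_
  rw [coord_pow_mulVec]
  ring

section Main

variable {π : Fin n → ℝ} {P : Matrix (Fin n) (Fin n) ℝ} {f : Fin n → ℝ}

lemma autocov_eq (hπpos : ∀ x, 0 < π x) (k : ℕ) :
    autocov π P f k = (fun x => Real.sqrt (π x) * (f x - ∑ z, π z * f z)) ⬝ᵥ
      ((symm π P) ^ k).mulVec (fun x => Real.sqrt (π x) * (f x - ∑ z, π z * f z)) := by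
  unfold autocov
  rw [dotProduct]
  refine Finset.sum_congr rfl fun x _ => ?_
  rw [Matrix.mulVec, dotProduct, Finset.mul_sum]
  refine Finset.sum_congr rfl fun y _ => ?_
  rw [symm_pow hπpos]
  have hx2 : Real.sqrt (π x) * Real.sqrt (π x) = π x := Real.mul_self_sqrt (hπpos x).le
  have hy := (sqrt_pos' hπpos y).ne'
  have h2 : Real.sqrt (π x) * (P ^ k) x y / Real.sqrt (π y) *
      (Real.sqrt (π y) * (f y - ∑ z, π z * f z))
      = Real.sqrt (π x) * (P ^ k) x y * (f y - ∑ z, π z * f z) := by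
    field_simp
  rw [h2]
  linear_combination (-(f x - ∑ z, π z * f z) * (P ^ k) x y * (f y - ∑ z, π z * f z)) * hx2

lemma habs_all (hπpos : ∀ x, 0 < π x) (hP : IsStochastic P) (hrev : IsReversible π P) :
    ∀ e, |(symm_isHermitian hπpos hrev).eigenvalues e| ≤ 1 := by
  intro e
  exact eig_abs_le_one hP (eig_transfer hπpos (evec_mulVec (symm_isHermitian hπpos hrev) e))
    (eig_vec_ne hπpos (evec_ne_zero (symm_isHermitian hπpos hrev) e))

lemma hker_all (hπpos : ∀ x, 0 < π x) (hπsum : ∑ x, π x = 1)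
    (hP : IsStochastic P) (hrev : IsReversible π P) (hirr : MatIrreducible P) (f : Fin n → ℝ) :
    ∀ e, (symm_isHermitian hπpos hrev).eigenvalues e = 1 →
      evec (symm_isHermitian hπpos hrev) e ⬝ᵥ
        (fun x => Real.sqrt (π x) * (f x - ∑ z, π z * f z)) = 0 := by
  set hS := symm_isHermitian hπpos hrev with hhS
  set g : Fin n → ℝ := fun x => Real.sqrt (π x) * (f x - ∑ z, π z * f z) with hg
  intro e h1
  have hmv := evec_mulVec hS e
  have h1' : hS.eigenvalues e = 1 := h1
  rw [h1', one_smul] at hmv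
  have hmv1 : (symm π P).mulVec (evec hS e) = (1:ℝ) • evec hS e := by
    rw [hmv, one_smul]
  have htr := eig_transfer hπpos hmv1
  rw [one_smul] at htr
  have hconst := perron_const hP hirr htr
  -- c e = ∑ x, evec x * g x ; evec x = v x * sqrt πx with v constant
  have hx1 : n ≠ 0 := by
    intro h
    subst h
    have := hπsum
    simp at this
  have hne : Nonempty (Fin n) := ⟨⟨0, Nat.pos_of_ne_zero hx1⟩⟩
  obtain ⟨x1⟩ := hne
  set t : ℝ := evec hS e x1 / Real.sqrt (π x1) with ht
  have huv : ∀ x, evec hS e x = t * Real.sqrt (π x) := by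
    intro x
    have h5 := hconst x x1
    have hx := (sqrt_pos' hπpos x).ne'
    have hx1' := (sqrt_pos' hπpos x1).ne'
    rw [ht]
    field_simp at h5 ⊢
    linear_combination h5
  show evec hS e ⬝ᵥ g = 0
  simp only [dotProduct]
  calc ∑ x, evec hS e x * g x = ∑ x, t * (π x * (f x - ∑ z, π z * f z)) := by
        refine Finset.sum_congr rfl fun x _ => ?_
        rw [huv x]
        show t * Real.sqrt (π x) * (Real.sqrt (π x) * (f x - ∑ z, π z * f z)) = _
        have hx2 : Real.sqrt (π x) * Real.sqrt (π x) = π x := Real.mul_self_sqrt (hπpos x).le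
        linear_combination (t * (f x - ∑ z, π z * f z)) * hx2
    _ = t * ∑ x, (π x * f x - π x * (∑ z, π z * f z)) := by
        rw [Finset.mul_sum]
        exact Finset.sum_congr rfl fun x _ => by ring
    _ = 0 := by
        rw [Finset.sum_sub_distrib, ← Finset.sum_mul, hπsum, one_mul, sub_self, mul_zero]

lemma var_formula (hπpos : ∀ x, 0 < π x) (hπsum : ∑ x, π x = 1)
    (hP : IsStochastic P) (hrev : IsReversible π P) (hirr : MatIrreducible P) :
    HasAsymptVar π P f (∑ e, ((evec (symm_isHermitian hπpos hrev) e) ⬝ᵥ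
        (fun x => Real.sqrt (π x) * (f x - ∑ z, π z * f z))) ^ 2 *
      (if (symm_isHermitian hπpos hrev).eigenvalues e = 1 then 0 else
        (1 + (symm_isHermitian hπpos hrev).eigenvalues e) /
        (1 - (symm_isHermitian hπpos hrev).eigenvalues e))) := by
  set hS := symm_isHermitian hπpos hrev with hhS
  set g : Fin n → ℝ := fun x => Real.sqrt (π x) * (f x - ∑ z, π z * f z) with hg
  set lam : Fin n → ℝ := hS.eigenvalues with hlam
  set c : Fin n → ℝ := fun e => evec hS e ⬝ᵥ g with hc
  -- eigenvalue facts
  have habs : ∀ e, |lam e| ≤ 1 := habs_all hπpos hP hrev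
  have hker : ∀ e, lam e = 1 → c e = 0 := hker_all hπpos hπsum hP hrev hirr f
  -- rewrite varN
  have hvar : ∀ N, varN π P f N = ∑ e, (c e) ^ 2 *
      (((N : ℝ))⁻¹ * ∑ i ∈ Finset.range N, ∑ j ∈ Finset.range N,
        lam e ^ (max i j - min i j)) := by
    intro N
    unfold varN
    have h1 : ∀ i j : ℕ, autocov π P f (max i j - min i j)
        = ∑ e, lam e ^ (max i j - min i j) * (c e) ^ 2 := by
      intro i j
      rw [autocov_eq hπpos, quad_pow hS]
    simp only [h1]
    have step1 : ∀ i : ℕ, ∑ j ∈ Finset.range N, ∑ e, lam e ^ (max i j - min i j) * c e ^ 2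
        = ∑ e, ∑ j ∈ Finset.range N, lam e ^ (max i j - min i j) * c e ^ 2 :=
      fun i => Finset.sum_comm
    rw [Finset.sum_congr rfl (fun i _ => step1 i), Finset.sum_comm, Finset.mul_sum]
    refine Finset.sum_congr rfl fun e _ => ?_
    have h3 : ∑ i ∈ Finset.range N, ∑ j ∈ Finset.range N,
        lam e ^ (max i j - min i j) * c e ^ 2
        = (∑ i ∈ Finset.range N, ∑ j ∈ Finset.range N, lam e ^ (max i j - min i j))
          * c e ^ 2 := by
      rw [Finset.sum_mul]
      exact Finset.sum_congr rfl fun i _ => (Finset.sum_mul _ _ _).symm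
    rw [h3]
    ring
  unfold HasAsymptVar
  rw [show varN π P f = fun N : ℕ => ∑ e, (c e) ^ 2 *
      (((N : ℝ))⁻¹ * ∑ i ∈ Finset.range N, ∑ j ∈ Finset.range N,
        lam e ^ (max i j - min i j)) from funext hvar]
  apply tendsto_finset_sum
  intro e _
  by_cases hce : c e = 0
  · have h0 : (evec hS e ⬝ᵥ g) = c e := rfl
    rw [h0]
    simpa [hce] using (tendsto_const_nhds : Tendsto (fun _ : ℕ => (0:ℝ)) atTop (nhds 0))
  · have hne1 : lam e ≠ 1 := fun h => hce (hker e h)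
    have hle := abs_le.1 (habs e)
    have h2 : lam e < 1 := lt_of_le_of_ne hle.2 hne1
    have hif : (if lam e = 1 then (0:ℝ) else (1 + lam e) / (1 - lam e))
        = (1 + lam e) / (1 - lam e) := if_neg hne1
    rw [hif]
    exact (wlim hle.1 h2).const_mul _

end Main


lemma quad_one {A : Matrix (Fin n) (Fin n) ℝ} (hA : A.IsHermitian) (x : Fin n → ℝ) :
    x ⬝ᵥ A.mulVec x = ∑ e, hA.eigenvalues e * (evec hA e ⬝ᵥ x) ^ 2 := by
  have := quad_pow hA x 1
  simpa using this

lemma sym_dot {A : Matrix (Fin n) (Fin n) ℝ} (hA : A.IsHermitian) (x y : Fin n → ℝ) :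
    x ⬝ᵥ A.mulVec y = y ⬝ᵥ A.mulVec x := by
  have hAT : Aᵀ = A := by
    have := hA
    rwa [Matrix.IsHermitian, Matrix.conjTranspose_eq_transpose_of_trivial] at this
  rw [Matrix.dotProduct_mulVec]
  have h : A *ᵥ x = x ᵥ* A := by
    have h0 := (Matrix.vecMul_transpose A x).symm
    rwa [hAT] at h0
  rw [← h, dotProduct_comm]

lemma dot_sum {m : ℕ} (x : Fin n → ℝ) (F : Fin m → (Fin n → ℝ)) :
    x ⬝ᵥ (∑ e, F e) = ∑ e, x ⬝ᵥ F e := by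
  simp only [dotProduct, Finset.sum_apply, Finset.mul_sum]
  exact Finset.sum_comm

lemma mulVec_sum' (A : Matrix (Fin n) (Fin n) ℝ) (F : Fin n → (Fin n → ℝ)) :
    A.mulVec (∑ e, F e) = ∑ e, A.mulVec (F e) := by
  rw [← Matrix.mulVecLin_apply, map_sum]
  simp [Matrix.mulVecLin_apply]

section Eps

variable {A B : Matrix (Fin n) (Fin n) ℝ} (hA : A.IsHermitian) (hB : B.IsHermitian)
  (g : Fin n → ℝ) (ε : ℝ)

noncomputable def regM (A : Matrix (Fin n) (Fin n) ℝ) (ε : ℝ) : Matrix (Fin n) (Fin n) ℝ :=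
  (1 + ε) • (1 : Matrix (Fin n) (Fin n) ℝ) - A

noncomputable def regV {A : Matrix (Fin n) (Fin n) ℝ} (hA : A.IsHermitian) (g : Fin n → ℝ)
    (ε : ℝ) : Fin n → ℝ :=
  ∑ e, ((1 - hA.eigenvalues e + ε)⁻¹ * (evec hA e ⬝ᵥ g)) • evec hA e

lemma regM_mulVec_regV (habs : ∀ e, |hA.eigenvalues e| ≤ 1) (hε : 0 < ε) :
    (regM A ε).mulVec (regV hA g ε) = g := by
  unfold regM regV
  rw [Matrix.sub_mulVec, Matrix.smul_mulVec, Matrix.one_mulVec]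
  have h1 : A.mulVec (∑ e, ((1 - hA.eigenvalues e + ε)⁻¹ * (evec hA e ⬝ᵥ g)) • evec hA e)
      = ∑ e, ((1 - hA.eigenvalues e + ε)⁻¹ * (evec hA e ⬝ᵥ g) * hA.eigenvalues e) • evec hA e := by
    rw [mulVec_sum']
    refine Finset.sum_congr rfl fun e _ => ?_
    rw [Matrix.mulVec_smul, evec_mulVec]
    rw [smul_smul]
  rw [h1, Finset.smul_sum, ← Finset.sum_sub_distrib]
  have h2 : ∀ e, (1 + ε) • (((1 - hA.eigenvalues e + ε)⁻¹ * (evec hA e ⬝ᵥ g)) • evec hA e)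
      - ((1 - hA.eigenvalues e + ε)⁻¹ * (evec hA e ⬝ᵥ g) * hA.eigenvalues e) • evec hA e
      = (evec hA e ⬝ᵥ g) • evec hA e := by
    intro e
    rw [smul_smul, ← sub_smul]
    congr 1
    have hne : 1 - hA.eigenvalues e + ε ≠ 0 := by
      have := (abs_le.1 (habs e)).2
      have h0 : 0 < 1 - hA.eigenvalues e + ε := by linarith
      exact h0.ne'
    field_simp
    ring
  rw [Finset.sum_congr rfl fun e _ => h2 e, evec_sum_repr]

lemma dot_regV : g ⬝ᵥ regV hA g ε
    = ∑ e, (1 - hA.eigenvalues e + ε)⁻¹ * (evec hA e ⬝ᵥ g) ^ 2 := by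
  unfold regV
  rw [dot_sum]
  refine Finset.sum_congr rfl fun e _ => ?_
  rw [dotProduct_smul, smul_eq_mul, dotProduct_comm]
  ring

lemma regM_quad_nonneg (habs : ∀ e, |hA.eigenvalues e| ≤ 1) (hε : 0 < ε) (x : Fin n → ℝ) :
    0 ≤ x ⬝ᵥ (regM A ε).mulVec x := by
  unfold regM
  rw [Matrix.sub_mulVec, Matrix.smul_mulVec, Matrix.one_mulVec, dotProduct_sub,
    dotProduct_smul, quad_one hA, evec_parseval hA x x]
  rw [smul_eq_mul, Finset.mul_sum, ← Finset.sum_sub_distrib]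
  apply Finset.sum_nonneg
  intro e _
  have h1 := (abs_le.1 (habs e)).2
  nlinarith [sq_nonneg (evec hA e ⬝ᵥ x)]

lemma regM_isHermitian (hA : A.IsHermitian) : (regM A ε).IsHermitian := by
  unfold regM
  have h1 : ((1 + ε) • (1 : Matrix (Fin n) (Fin n) ℝ)).IsHermitian := by
    rw [Matrix.IsHermitian, Matrix.conjTranspose_eq_transpose_of_trivial,
      Matrix.transpose_smul, Matrix.transpose_one]
  exact h1.sub hA

lemma eps_ineq (hA : A.IsHermitian) (hB : B.IsHermitian)
    (habsA : ∀ e, |hA.eigenvalues e| ≤ 1) (habsB : ∀ e, |hB.eigenvalues e| ≤ 1)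
    (hdom : ∀ x : Fin n → ℝ, x ⬝ᵥ B.mulVec x ≤ x ⬝ᵥ A.mulVec x) (hε : 0 < ε) :
    ∑ e, (1 - hB.eigenvalues e + ε)⁻¹ * (evec hB e ⬝ᵥ g) ^ 2
      ≤ ∑ e, (1 - hA.eigenvalues e + ε)⁻¹ * (evec hA e ⬝ᵥ g) ^ 2 := by
  set yA := regV hA g ε with hyA
  set yB := regV hB g ε with hyB
  have kA : (regM A ε).mulVec yA = g := regM_mulVec_regV hA g ε habsA hε
  have kB : (regM B ε).mulVec yB = g := regM_mulVec_regV hB g ε habsB hε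
  have hMts : ∀ x : Fin n → ℝ,
      x ⬝ᵥ (regM A ε).mulVec x ≤ x ⬝ᵥ (regM B ε).mulVec x := by
    intro x
    unfold regM
    rw [Matrix.sub_mulVec, Matrix.sub_mulVec, dotProduct_sub, dotProduct_sub]
    have := hdom x
    linarith
  have hE : 0 ≤ (yA - yB) ⬝ᵥ (regM A ε).mulVec (yA - yB) :=
    regM_quad_nonneg hA ε habsA hε _
  have hexp : (yA - yB) ⬝ᵥ (regM A ε).mulVec (yA - yB)
      = g ⬝ᵥ yA - 2 * (g ⬝ᵥ yB) + yB ⬝ᵥ (regM A ε).mulVec yB := by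
    rw [Matrix.mulVec_sub, kA, sub_dotProduct, dotProduct_sub, dotProduct_sub]
    have e1 : yA ⬝ᵥ (regM A ε).mulVec yB = yB ⬝ᵥ g := by
      rw [sym_dot (regM_isHermitian ε hA), kA]
    rw [e1]
    rw [dotProduct_comm yA g, dotProduct_comm yB g]
    ring
  have hBB : yB ⬝ᵥ (regM A ε).mulVec yB ≤ g ⬝ᵥ yB := by
    have := hMts yB
    rw [kB] at this
    rw [dotProduct_comm g yB]
    exact this
  have hfin : g ⬝ᵥ yB ≤ g ⬝ᵥ yA := by linarith
  rw [hyA, hyB, dot_regV, dot_regV] at hfin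
  exact hfin

lemma sum_q_tendsto (hA : A.IsHermitian)
    (habs : ∀ e, |hA.eigenvalues e| ≤ 1)
    (hker : ∀ e, hA.eigenvalues e = 1 → evec hA e ⬝ᵥ g = 0) :
    Tendsto (fun k : ℕ => ∑ e, (1 - hA.eigenvalues e + ((k : ℝ) + 1)⁻¹)⁻¹ *
        (evec hA e ⬝ᵥ g) ^ 2) atTop
      (nhds (∑ e, if hA.eigenvalues e = 1 then 0
        else (1 - hA.eigenvalues e)⁻¹ * (evec hA e ⬝ᵥ g) ^ 2)) := by
  apply tendsto_finset_sum
  intro e _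
  by_cases h1 : hA.eigenvalues e = 1
  · rw [if_pos h1]
    simp only [hker e h1]
    simpa using (tendsto_const_nhds : Tendsto (fun _ : ℕ => (0:ℝ)) atTop (nhds 0))
  · rw [if_neg h1]
    have hlt : hA.eigenvalues e < 1 := lt_of_le_of_ne (abs_le.1 (habs e)).2 h1
    have h0 : Tendsto (fun k : ℕ => ((k : ℝ) + 1)⁻¹) atTop (nhds 0) := by
      simpa [one_div] using tendsto_one_div_add_atTop_nhds_zero_nat (𝕜 := ℝ)
    have h2 : Tendsto (fun k : ℕ => 1 - hA.eigenvalues e + ((k : ℝ) + 1)⁻¹) atTop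
        (nhds (1 - hA.eigenvalues e)) := by
      simpa using (tendsto_const_nhds (x := 1 - hA.eigenvalues e)
        (f := atTop (α := ℕ))).add h0
    have hne : (1 - hA.eigenvalues e) ≠ 0 := by
      have : 0 < 1 - hA.eigenvalues e := by linarith
      exact this.ne'
    exact (h2.inv₀ hne).mul_const _

lemma comp_le (hA : A.IsHermitian) (hB : B.IsHermitian)
    (habsA : ∀ e, |hA.eigenvalues e| ≤ 1) (habsB : ∀ e, |hB.eigenvalues e| ≤ 1)
    (hkerA : ∀ e, hA.eigenvalues e = 1 → evec hA e ⬝ᵥ g = 0)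
    (hkerB : ∀ e, hB.eigenvalues e = 1 → evec hB e ⬝ᵥ g = 0)
    (hdom : ∀ x : Fin n → ℝ, x ⬝ᵥ B.mulVec x ≤ x ⬝ᵥ A.mulVec x) :
    ∑ e, (evec hB e ⬝ᵥ g) ^ 2 * (if hB.eigenvalues e = 1 then 0
        else (1 + hB.eigenvalues e) / (1 - hB.eigenvalues e))
      ≤ ∑ e, (evec hA e ⬝ᵥ g) ^ 2 * (if hA.eigenvalues e = 1 then 0
        else (1 + hA.eigenvalues e) / (1 - hA.eigenvalues e)) := by
  have key : (∑ e, if hB.eigenvalues e = 1 then 0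
        else (1 - hB.eigenvalues e)⁻¹ * (evec hB e ⬝ᵥ g) ^ 2)
      ≤ ∑ e, if hA.eigenvalues e = 1 then 0
        else (1 - hA.eigenvalues e)⁻¹ * (evec hA e ⬝ᵥ g) ^ 2 := by
    refine le_of_tendsto_of_tendsto' (sum_q_tendsto g hB habsB hkerB)
      (sum_q_tendsto g hA habsA hkerA) fun k => ?_
    exact eps_ineq g (((k : ℝ) + 1)⁻¹) hA hB habsA habsB hdom (by positivity)
  have idA : ∑ e, (evec hA e ⬝ᵥ g) ^ 2 * (if hA.eigenvalues e = 1 then 0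
        else (1 + hA.eigenvalues e) / (1 - hA.eigenvalues e))
      = -(g ⬝ᵥ g) + 2 * ∑ e, (if hA.eigenvalues e = 1 then 0
        else (1 - hA.eigenvalues e)⁻¹ * (evec hA e ⬝ᵥ g) ^ 2) := by
    rw [evec_parseval hA g g, Finset.mul_sum, ← Finset.sum_neg_distrib, ← Finset.sum_add_distrib]
    refine Finset.sum_congr rfl fun e _ => ?_
    by_cases h1 : hA.eigenvalues e = 1
    · rw [if_pos h1, if_pos h1, hkerA e h1]
      ring
    · rw [if_neg h1, if_neg h1]
      have hne : (1 - hA.eigenvalues e) ≠ 0 := sub_ne_zero.2 (Ne.symm h1)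
      field_simp
      ring
  have idB : ∑ e, (evec hB e ⬝ᵥ g) ^ 2 * (if hB.eigenvalues e = 1 then 0
        else (1 + hB.eigenvalues e) / (1 - hB.eigenvalues e))
      = -(g ⬝ᵥ g) + 2 * ∑ e, (if hB.eigenvalues e = 1 then 0
        else (1 - hB.eigenvalues e)⁻¹ * (evec hB e ⬝ᵥ g) ^ 2) := by
    rw [evec_parseval hB g g, Finset.mul_sum, ← Finset.sum_neg_distrib, ← Finset.sum_add_distrib]
    refine Finset.sum_congr rfl fun e _ => ?_
    by_cases h1 : hB.eigenvalues e = 1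
    · rw [if_pos h1, if_pos h1, hkerB e h1]
      ring
    · rw [if_neg h1, if_neg h1]
      have hne : (1 - hB.eigenvalues e) ≠ 0 := sub_ne_zero.2 (Ne.symm h1)
      field_simp
      ring
  rw [idA, idB]
  linarith

end Eps

section Combo

variable {π : Fin n → ℝ} {ℓ : ℕ}

lemma combo_stoch (Pk : Fin ℓ → Matrix (Fin n) (Fin n) ℝ) (a : Fin ℓ → ℝ)
    (hPk : ∀ k, IsStochastic (Pk k)) (ha : ∀ k, 0 ≤ a k) (hasum : ∑ k, a k = 1) :
    IsStochastic (∑ k, a k • Pk k) := by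
  constructor
  · intro x y
    rw [Matrix.sum_apply]
    exact Finset.sum_nonneg fun k _ => by
      rw [Matrix.smul_apply, smul_eq_mul]
      exact mul_nonneg (ha k) ((hPk k).1 x y)
  · intro x
    have h1 : ∀ y, (∑ k, a k • Pk k) x y = ∑ k, a k * Pk k x y := by
      intro y
      rw [Matrix.sum_apply]
      exact Finset.sum_congr rfl fun k _ => by rw [Matrix.smul_apply, smul_eq_mul]
    simp only [h1]
    rw [Finset.sum_comm]
    calc ∑ k, ∑ y, a k * Pk k x y = ∑ k, a k * ∑ y, Pk k x y := by
          simp [Finset.mul_sum]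
      _ = ∑ k, a k := Finset.sum_congr rfl fun k _ => by rw [(hPk k).2 x, mul_one]
      _ = 1 := hasum

lemma combo_rev (Pk : Fin ℓ → Matrix (Fin n) (Fin n) ℝ) (a : Fin ℓ → ℝ)
    (hrevPk : ∀ k, IsReversible π (Pk k)) :
    IsReversible π (∑ k, a k • Pk k) := by
  intro x y
  rw [Matrix.sum_apply, Matrix.sum_apply, Finset.mul_sum, Finset.mul_sum]
  refine Finset.sum_congr rfl fun k _ => ?_
  rw [Matrix.smul_apply, Matrix.smul_apply, smul_eq_mul, smul_eq_mul]
  calc π x * (a k * Pk k x y) = a k * (π x * Pk k x y) := by ring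
    _ = a k * (π y * Pk k y x) := by rw [hrevPk k x y]
    _ = π y * (a k * Pk k y x) := by ring

lemma sum_mulVec' (F : Fin ℓ → Matrix (Fin n) (Fin n) ℝ) (x : Fin n → ℝ) :
    (∑ k, F k).mulVec x = ∑ k, (F k).mulVec x := by
  funext i
  simp only [Matrix.mulVec, dotProduct, Matrix.sum_apply, Finset.sum_apply, Finset.sum_mul]
  exact Finset.sum_comm

lemma symm_combo_sub (hπpos : ∀ x, 0 < π x)
    (Pk P'k : Fin ℓ → Matrix (Fin n) (Fin n) ℝ) (a : Fin ℓ → ℝ) :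
    symm π (∑ k, a k • Pk k) - symm π (∑ k, a k • P'k k)
      = ∑ k, a k • symm π (Pk k - P'k k) := by
  ext x y
  simp only [Matrix.sub_apply, Matrix.sum_apply, Matrix.smul_apply, smul_eq_mul,
    symm, Matrix.of_apply]
  have key : ∀ (Q : Fin ℓ → Matrix (Fin n) (Fin n) ℝ),
      Real.sqrt (π x) * (∑ k, a k * Q k x y) / Real.sqrt (π y)
        = ∑ k, a k * (Real.sqrt (π x) * Q k x y / Real.sqrt (π y)) := by
    intro Q
    rw [Finset.mul_sum, Finset.sum_div]
    exact Finset.sum_congr rfl fun k _ => by ring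
  rw [key Pk, key P'k, ← Finset.sum_sub_distrib]
  exact Finset.sum_congr rfl fun k _ => by ring

lemma quad_symm_dom (hπpos : ∀ x, 0 < π x)
    (Pk P'k : Fin ℓ → Matrix (Fin n) (Fin n) ℝ) (a : Fin ℓ → ℝ)
    (hrevPk : ∀ k, IsReversible π (Pk k)) (hrevP'k : ∀ k, IsReversible π (P'k k))
    (ha : ∀ k, 0 < a k)
    (heig : ∀ k, ∀ (μ : ℝ) (v : Fin n → ℝ), v ≠ 0 →
      (Pk k - P'k k).mulVec v = μ • v → 0 ≤ μ)
    (x : Fin n → ℝ) :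
    x ⬝ᵥ (symm π (∑ k, a k • P'k k)).mulVec x
      ≤ x ⬝ᵥ (symm π (∑ k, a k • Pk k)).mulVec x := by
  have hrevd : ∀ k, IsReversible π (Pk k - P'k k) := by
    intro k x' y'
    simp only [Matrix.sub_apply, mul_sub]
    rw [hrevPk k x' y', hrevP'k k x' y']
  have hMk : ∀ k, (symm π (Pk k - P'k k)).IsHermitian :=
    fun k => symm_isHermitian hπpos (hrevd k)
  have hterm : ∀ k, 0 ≤ x ⬝ᵥ (symm π (Pk k - P'k k)).mulVec x := by
    intro k
    rw [quad_one (hMk k)]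
    apply Finset.sum_nonneg
    intro e _
    have hmv := evec_mulVec (hMk k) e
    have htr := eig_transfer hπpos hmv
    have hvne := eig_vec_ne hπpos (evec_ne_zero (hMk k) e)
    have := heig k ((hMk k).eigenvalues e) _ hvne htr
    positivity
  have hdiff : x ⬝ᵥ (symm π (∑ k, a k • Pk k)).mulVec x
      - x ⬝ᵥ (symm π (∑ k, a k • P'k k)).mulVec x
      = ∑ k, a k * (x ⬝ᵥ (symm π (Pk k - P'k k)).mulVec x) := by
    rw [← dotProduct_sub, ← Matrix.sub_mulVec, symm_combo_sub hπpos, sum_mulVec']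
    have h2 : ∀ k, ((a k • symm π (Pk k - P'k k)).mulVec x)
        = a k • ((symm π (Pk k - P'k k)).mulVec x) :=
      fun k => Matrix.smul_mulVec _ _ _
    rw [Finset.sum_congr rfl fun k _ => h2 k, dot_sum]
    exact Finset.sum_congr rfl fun k _ => by rw [dotProduct_smul, smul_eq_mul]
  have hsum : 0 ≤ ∑ k, a k * (x ⬝ᵥ (symm π (Pk k - P'k k)).mulVec x) :=
    Finset.sum_nonneg fun k _ => mul_nonneg (ha k).le (hterm k)
  linarith

end Combo

end Stmt10Aux

theorem stmt10 {n ℓ : ℕ} (π : Fin n → ℝ)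
    (Pk P'k : Fin ℓ → Matrix (Fin n) (Fin n) ℝ) (a : Fin ℓ → ℝ)
    (hπpos : ∀ x, 0 < π x) (hπsum : ∑ x, π x = 1)
    (hPk : ∀ k, IsStochastic (Pk k)) (hP'k : ∀ k, IsStochastic (P'k k))
    (hrevPk : ∀ k, IsReversible π (Pk k)) (hrevP'k : ∀ k, IsReversible π (P'k k))
    (ha : ∀ k, 0 < a k) (hasum : ∑ k, a k = 1)
    (hirrP : MatIrreducible (∑ k, a k • Pk k))
    (hirrP' : MatIrreducible (∑ k, a k • P'k k))
    (heig : ∀ k, ∀ (μ : ℝ) (v : Fin n → ℝ), v ≠ 0 →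
      (Pk k - P'k k).mulVec v = μ • v → 0 ≤ μ) :
    EffDom π (∑ k, a k • P'k k) (∑ k, a k • Pk k) := by
  intro f v1 v2 h1 h2
  have hPs : IsStochastic (∑ k, a k • Pk k) :=
    Stmt10Aux.combo_stoch Pk a hPk (fun k => (ha k).le) hasum
  have hP's : IsStochastic (∑ k, a k • P'k k) :=
    Stmt10Aux.combo_stoch P'k a hP'k (fun k => (ha k).le) hasum
  have hrevP : IsReversible π (∑ k, a k • Pk k) := Stmt10Aux.combo_rev Pk a hrevPk
  have hrevP' : IsReversible π (∑ k, a k • P'k k) := Stmt10Aux.combo_rev P'k a hrevP'k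
  have hv2 := Stmt10Aux.var_formula (f := f) hπpos hπsum hPs hrevP hirrP
  have hv1 := Stmt10Aux.var_formula (f := f) hπpos hπsum hP's hrevP' hirrP'
  have h2' : Filter.Tendsto (varN π (∑ k, a k • Pk k) f) atTop (nhds v2) := h2
  have h1' : Filter.Tendsto (varN π (∑ k, a k • P'k k) f) atTop (nhds v1) := h1
  have hv2' : Filter.Tendsto (varN π (∑ k, a k • Pk k) f) atTop (nhds _) := hv2
  have hv1' : Filter.Tendsto (varN π (∑ k, a k • P'k k) f) atTop (nhds _) := hv1
  have e2 := tendsto_nhds_unique h2' hv2'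
  have e1 := tendsto_nhds_unique h1' hv1'
  rw [e1, e2]
  exact Stmt10Aux.comp_le _ (Stmt10Aux.symm_isHermitian hπpos hrevP)
    (Stmt10Aux.symm_isHermitian hπpos hrevP')
    (Stmt10Aux.habs_all hπpos hPs hrevP) (Stmt10Aux.habs_all hπpos hP's hrevP')
    (Stmt10Aux.hker_all hπpos hπsum hPs hrevP hirrP f)
    (Stmt10Aux.hker_all hπpos hπsum hP's hrevP' hirrP' f)
    (Stmt10Aux.quad_symm_dom hπpos Pk P'k a hrevPk hrevP'k ha heig)
end

section
/- If P and Q are irreducible and reversible with respect to π, and P efficiency-dominates Q, then P eigen-dominates Q: writing the eigenvalues of P as λ_1 ≥ … ≥ λ_n and of Q as β_1 ≥ … ≥ β_n (with multiplicity), we have λ_i ≤ β_i for every i. -/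
open Matrix BigOperators Filter

noncomputable def gfun (x : ℝ) : ℝ := (1 + x) / (1 - x)

lemma gfun_one : gfun 1 = 0 := by simp [gfun]

lemma gfun_mono {a b : ℝ} (h1 : -1 ≤ a) (hab : a ≤ b) (h2 : b < 1) : gfun a ≤ gfun b := by
  rw [gfun, gfun, div_le_div_iff₀ (by linarith) (by linarith)]
  nlinarith

lemma gfun_strict {a b : ℝ} (h1 : -1 ≤ a) (hab : a < b) (h2 : b < 1) : gfun a < gfun b := by
  rw [gfun, gfun, div_lt_div_iff₀ (by linarith) (by linarith)]
  nlinarith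

lemma TN_closed (x : ℝ) (hx : x ≠ 1) (N : ℕ) :
    ∑ i ∈ Finset.range N, ∑ j ∈ Finset.range N, x ^ (max i j - min i j)
      = N * (1 + x) / (1 - x) - 2 * x * (1 - x ^ N) / (1 - x) ^ 2 := by
  have hx1 : (1 : ℝ) - x ≠ 0 := by intro h; apply hx; linarith
  have hx2 : x - 1 ≠ 0 := by intro h; apply hx; linarith
  induction N with
  | zero => simp
  | succ N ih =>
    have hgeom : ∀ M : ℕ, (∑ j ∈ Finset.range M, x ^ (M - j)) = x * ((x ^ M - 1) / (x - 1)) := by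
      intro M
      have h1 : (∑ j ∈ Finset.range M, x ^ (M - j)) = ∑ j ∈ Finset.range M, x ^ (j + 1) := by
        rw [← Finset.sum_range_reflect]
        apply Finset.sum_congr rfl
        intro j hj
        rw [Finset.mem_range] at hj
        congr 1
        omega
      rw [h1]
      rw [← geom_sum_eq hx M, Finset.mul_sum]
      apply Finset.sum_congr rfl
      intro j _
      rw [pow_succ, mul_comm]
    have hsplit : (∑ i ∈ Finset.range (N+1), ∑ j ∈ Finset.range (N+1), x ^ (max i j - min i j))
        = (∑ i ∈ Finset.range N, ∑ j ∈ Finset.range N, x ^ (max i j - min i j))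
          + (∑ i ∈ Finset.range N, x ^ (N - i)) + ((∑ j ∈ Finset.range N, x ^ (N - j)) + 1) := by
      rw [Finset.sum_range_succ]
      congr 1
      · rw [Finset.sum_congr rfl (fun i _ => Finset.sum_range_succ (fun j => x ^ (max i j - min i j)) N),
          Finset.sum_add_distrib]
        congr 1
        apply Finset.sum_congr rfl
        intro i hi
        rw [Finset.mem_range] at hi
        congr 1
        omega
      · rw [Finset.sum_range_succ]
        congr 1
        · apply Finset.sum_congr rfl
          intro j hj
          rw [Finset.mem_range] at hj
          congr 1
          omega
        · simp
    rw [hsplit, ih, hgeom]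
    push_cast
    field_simp
    ring

lemma TN_tendsto {x : ℝ} (h1 : -1 ≤ x) (h2 : x < 1) :
    Tendsto (fun N : ℕ => (N : ℝ)⁻¹ * ∑ i ∈ Finset.range N, ∑ j ∈ Finset.range N,
      x ^ (max i j - min i j)) atTop (nhds ((1 + x) / (1 - x))) := by
  have hx : x ≠ 1 := ne_of_lt h2
  have hx1 : (1 : ℝ) - x ≠ 0 := by intro h; apply hx; linarith
  have h0 : Tendsto (fun N : ℕ => (N:ℝ)⁻¹ * (2 * x * (1 - x ^ N) / (1 - x) ^ 2)) atTop (nhds 0) := by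
    apply squeeze_zero_norm (a := fun N : ℕ => (4 / (1 - x) ^ 2) / (N : ℝ))
    · intro N
      have hxa : |x| ≤ 1 := abs_le.mpr ⟨h1, h2.le⟩
      have hxn : |x ^ N| ≤ 1 := by
        rw [abs_pow]; exact pow_le_one₀ (abs_nonneg x) hxa
      have hxn' := abs_le.mp hxn
      have hxa' := abs_le.mp hxa
      have hb : |2 * x * (1 - x ^ N)| ≤ 4 := by
        rw [abs_mul, abs_mul]
        have h2' : |(2:ℝ)| = 2 := by norm_num
        have h3 : |1 - x ^ N| ≤ 2 := abs_le.mpr ⟨by linarith, by linarith⟩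
        rw [h2']
        nlinarith [abs_nonneg x, abs_nonneg (1 - x ^ N)]
      calc ‖(N:ℝ)⁻¹ * (2 * x * (1 - x ^ N) / (1 - x) ^ 2)‖
          = (N:ℝ)⁻¹ * (|2 * x * (1 - x ^ N)| / (1 - x) ^ 2) := by
            rw [Real.norm_eq_abs, abs_mul, abs_inv, Nat.abs_cast, abs_div,
              abs_of_nonneg (by positivity : (0:ℝ) ≤ (1 - x) ^ 2)]
        _ ≤ (N:ℝ)⁻¹ * (4 / (1 - x) ^ 2) := by
            gcongr
        _ = (4 / (1 - x) ^ 2) / (N : ℝ) := by rw [div_eq_mul_inv]; ring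
    · exact tendsto_const_div_atTop_nhds_zero_nat _
  have hmain : Tendsto (fun N : ℕ => (1 + x) / (1 - x) - (N:ℝ)⁻¹ * (2 * x * (1 - x ^ N) / (1 - x) ^ 2))
      atTop (nhds ((1 + x) / (1 - x) - 0)) := tendsto_const_nhds.sub h0
  rw [sub_zero] at hmain
  apply hmain.congr'
  filter_upwards [eventually_ge_atTop 1] with N hN
  have hNne : (N : ℝ) ≠ 0 := Nat.cast_ne_zero.mpr (by omega)
  rw [TN_closed x hx N]
  field_simp

section Helpers

variable {n : ℕ}

lemma pInner_add_left (π f g h : Fin n → ℝ) :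
    pInner π (f + g) h = pInner π f h + pInner π g h := by
  simp [pInner, add_mul, Finset.sum_add_distrib]

lemma pInner_smul_left (π : Fin n → ℝ) (c : ℝ) (f h : Fin n → ℝ) :
    pInner π (c • f) h = c * pInner π f h := by
  simp [pInner, Finset.mul_sum, mul_assoc]

lemma pInner_smul_right (π : Fin n → ℝ) (c : ℝ) (f h : Fin n → ℝ) :
    pInner π f (c • h) = c * pInner π f h := by
  simp only [pInner, Pi.smul_apply, smul_eq_mul, Finset.mul_sum]
  apply Finset.sum_congr rfl
  intro x _
  ring

lemma isStochastic_pow {P : Matrix (Fin n) (Fin n) ℝ} (hP : IsStochastic P) (k : ℕ) :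
    IsStochastic (P ^ k) := by
  induction k with
  | zero =>
    constructor
    · intro x y
      rw [pow_zero]
      by_cases h : x = y <;> simp [Matrix.one_apply, h]
    · intro x
      rw [pow_zero]
      simp [Matrix.one_apply]
  | succ k ih =>
    rw [pow_succ]
    constructor
    · intro x y
      rw [Matrix.mul_apply]
      exact Finset.sum_nonneg fun z _ => mul_nonneg (ih.1 x z) (hP.1 z y)
    · intro x
      have : ∀ y : Fin n, (P ^ k * P) x y = ∑ z, (P ^ k) x z * P z y := fun y => Matrix.mul_apply
      rw [Finset.sum_congr rfl fun y _ => this y, Finset.sum_comm]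
      have : ∀ z : Fin n, (∑ y, (P ^ k) x z * P z y) = (P ^ k) x z := by
        intro z
        rw [← Finset.mul_sum, hP.2 z, mul_one]
      rw [Finset.sum_congr rfl fun z _ => this z, ih.2 x]

lemma mulVec_pow_eig {P : Matrix (Fin n) (Fin n) ℝ} {v : Fin n → ℝ} {l : ℝ}
    (h : P.mulVec v = l • v) (k : ℕ) : (P ^ k).mulVec v = (l ^ k) • v := by
  induction k with
  | zero => simp [Matrix.one_mulVec]
  | succ k ih =>
    rw [pow_succ, ← Matrix.mulVec_mulVec, h, Matrix.mulVec_smul, ih, smul_smul, pow_succ, mul_comm]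

lemma v_ne_zero {π : Fin n → ℝ} {v : Fin n → Fin n → ℝ}
    (hortho : ∀ i j, pInner π (v i) (v j) = if i = j then 1 else 0) (m : Fin n) :
    v m ≠ 0 := by
  intro h
  have h2 := hortho m m
  rw [h] at h2
  simp [pInner] at h2

lemma eig_bound {P : Matrix (Fin n) (Fin n) ℝ} (hP : IsStochastic P) {v : Fin n → ℝ} {l : ℝ}
    (h : P.mulVec v = l • v) (hv : v ≠ 0) : |l| ≤ 1 := by
  obtain ⟨y0, hy0⟩ : ∃ y, v y ≠ 0 := by
    by_contra hc
    push_neg at hc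
    exact hv (funext hc)
  obtain ⟨x0, -, hx0⟩ := Finset.exists_max_image Finset.univ (fun x => |v x|)
    ⟨y0, Finset.mem_univ y0⟩
  have hpos : 0 < |v x0| := lt_of_lt_of_le (abs_pos.mpr hy0) (hx0 y0 (Finset.mem_univ y0))
  have hx := congrFun h x0
  simp only [Pi.smul_apply, smul_eq_mul] at hx
  have hchain : |l| * |v x0| ≤ |v x0| := by
    calc |l| * |v x0| = |l * v x0| := (abs_mul l (v x0)).symm
      _ = |∑ y, P x0 y * v y| := by rw [← hx]; rfl
      _ ≤ ∑ y, |P x0 y * v y| := Finset.abs_sum_le_sum_abs _ _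
      _ = ∑ y, P x0 y * |v y| := by
          apply Finset.sum_congr rfl
          intro y _
          rw [abs_mul, abs_of_nonneg (hP.1 x0 y)]
      _ ≤ ∑ y, P x0 y * |v x0| := by
          apply Finset.sum_le_sum
          intro y _
          exact mul_le_mul_of_nonneg_left (hx0 y (Finset.mem_univ y)) (hP.1 x0 y)
      _ = |v x0| := by rw [← Finset.sum_mul, hP.2 x0, one_mul]
  exact le_of_mul_le_mul_right (by linarith [hchain]) hpos

lemma eig_one_const {P : Matrix (Fin n) (Fin n) ℝ} (hP : IsStochastic P)
    (hirr : MatIrreducible P) {v : Fin n → ℝ} (h : P.mulVec v = v) :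
    ∀ x y, v x = v y := by
  have hsmul : P.mulVec v = (1 : ℝ) • v := by rw [h, one_smul]
  have hpow : ∀ k, (P ^ k).mulVec v = v := by
    intro k
    rw [mulVec_pow_eig hsmul k, one_pow, one_smul]
  intro x y
  obtain ⟨x0, -, hx0⟩ := Finset.exists_max_image Finset.univ v ⟨x, Finset.mem_univ x⟩
  have key : ∀ z : Fin n, v z = v x0 := by
    intro z
    obtain ⟨k, hk⟩ := hirr x0 z
    have hPk := isStochastic_pow hP k
    have hxv := congrFun (hpow k) x0
    have hsum : (∑ y, (P ^ k) x0 y * (v x0 - v y)) = 0 := by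
      have h1 : (∑ y, (P ^ k) x0 y * (v x0 - v y))
          = (∑ y, (P ^ k) x0 y) * v x0 - ∑ y, (P ^ k) x0 y * v y := by
        rw [Finset.sum_mul, ← Finset.sum_sub_distrib]
        apply Finset.sum_congr rfl
        intro y _
        ring
      rw [h1, hPk.2 x0, one_mul]
      have : (∑ y, (P ^ k) x0 y * v y) = v x0 := hxv
      rw [this, sub_self]
    have hterm : (P ^ k) x0 z * (v x0 - v z) = 0 := by
      have := (Finset.sum_eq_zero_iff_of_nonneg ?_).mp hsum z (Finset.mem_univ z)
      · exact this
      · intro y _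
        exact mul_nonneg (hPk.1 x0 y) (by linarith [hx0 y (Finset.mem_univ y)])
    have := mul_eq_zero.mp hterm
    rcases this with h' | h'
    · exact absurd h' (ne_of_gt hk)
    · linarith
  rw [key x, key y]

lemma pInner_mulVec {π : Fin n → ℝ} {P : Matrix (Fin n) (Fin n) ℝ} (hrev : IsReversible π P)
    (f g : Fin n → ℝ) : pInner π (P.mulVec f) g = pInner π f (P.mulVec g) := by
  simp only [pInner, Matrix.mulVec, dotProduct]
  have hL : (∑ x, (∑ y, P x y * f y) * g x * π x) = ∑ x, ∑ y, P x y * f y * g x * π x := by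
    apply Finset.sum_congr rfl
    intro x _
    rw [Finset.sum_mul, Finset.sum_mul]
  have hR : (∑ x, f x * (∑ y, P x y * g y) * π x) = ∑ x, ∑ y, P x y * g y * f x * π x := by
    apply Finset.sum_congr rfl
    intro x _
    rw [Finset.mul_sum, Finset.sum_mul]
    apply Finset.sum_congr rfl
    intro y _
    ring
  rw [hL, hR, Finset.sum_comm]
  apply Finset.sum_congr rfl
  intro x _
  apply Finset.sum_congr rfl
  intro y _
  have hxy := hrev x y
  have hyx := hrev y x
  linear_combination (-(f x * g y)) * hxy

lemma ortho_complete {π : Fin n → ℝ} (hπpos : ∀ x, 0 < π x) {v : Fin n → Fin n → ℝ}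
    (hortho : ∀ i j, pInner π (v i) (v j) = if i = j then 1 else 0) (f : Fin n → ℝ) (x : Fin n) :
    (∑ m, pInner π f (v m) * v m x) = f x := by
  set V : Matrix (Fin n) (Fin n) ℝ := Matrix.of fun m x => v m x * Real.sqrt (π x) with hV
  have hVVt : V * Vᵀ = 1 := by
    ext m j
    rw [Matrix.mul_apply, Matrix.one_apply]
    have : (∑ x, V m x * Vᵀ x j) = pInner π (v m) (v j) := by
      apply Finset.sum_congr rfl
      intro y _
      simp only [Matrix.transpose_apply, hV, Matrix.of_apply]
      have hs : Real.sqrt (π y) * Real.sqrt (π y) = π y := Real.mul_self_sqrt (hπpos y).le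
      calc v m y * Real.sqrt (π y) * (v j y * Real.sqrt (π y))
          = v m y * v j y * (Real.sqrt (π y) * Real.sqrt (π y)) := by ring
        _ = v m y * v j y * π y := by rw [hs]
    rw [this, hortho m j]
  have hVtV : Vᵀ * V = 1 := mul_eq_one_comm.mp hVVt
  have hS : ∀ y : Fin n, y ≠ x → (∑ m, v m y * v m x) = 0 := by
    intro y hyx
    have h1 := congrFun (congrFun hVtV y) x
    rw [Matrix.mul_apply, Matrix.one_apply] at h1
    simp only [hyx, if_false] at h1
    have h2 : (∑ m, Vᵀ y m * V m x)
        = Real.sqrt (π y) * Real.sqrt (π x) * (∑ m, v m y * v m x) := by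
      rw [Finset.mul_sum]
      apply Finset.sum_congr rfl
      intro m _
      simp only [Matrix.transpose_apply, hV, Matrix.of_apply]
      ring
    rw [h2] at h1
    have hne : Real.sqrt (π y) * Real.sqrt (π x) ≠ 0 := by
      apply mul_ne_zero <;> exact (Real.sqrt_pos.mpr (hπpos _)).ne'
    exact (mul_eq_zero.mp h1).resolve_left hne
  have hSx : (∑ m, v m x * v m x) = (π x)⁻¹ := by
    have h1 := congrFun (congrFun hVtV x) x
    rw [Matrix.mul_apply, Matrix.one_apply] at h1
    simp only [if_true, eq_self_iff_true] at h1
    have h2 : (∑ m, Vᵀ x m * V m x) = π x * (∑ m, v m x * v m x) := by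
      rw [Finset.mul_sum]
      apply Finset.sum_congr rfl
      intro m _
      simp only [Matrix.transpose_apply, hV, Matrix.of_apply]
      have hs : Real.sqrt (π x) * Real.sqrt (π x) = π x := Real.mul_self_sqrt (hπpos x).le
      calc v m x * Real.sqrt (π x) * (v m x * Real.sqrt (π x))
          = (Real.sqrt (π x) * Real.sqrt (π x)) * (v m x * v m x) := by ring
        _ = π x * (v m x * v m x) := by rw [hs]
    rw [h2] at h1
    exact (inv_eq_of_mul_eq_one_right h1).symm
  calc (∑ m, pInner π f (v m) * v m x)
      = ∑ m, ∑ y, f y * v m y * π y * v m x := by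
        apply Finset.sum_congr rfl
        intro m _
        rw [pInner, Finset.sum_mul]
    _ = ∑ y, ∑ m, f y * v m y * π y * v m x := Finset.sum_comm
    _ = ∑ y, f y * π y * (∑ m, v m y * v m x) := by
        apply Finset.sum_congr rfl
        intro y _
        rw [Finset.mul_sum]
        apply Finset.sum_congr rfl
        intro m _
        ring
    _ = f x := by
        rw [Finset.sum_eq_single x]
        · rw [hSx]
          field_simp [(hπpos x).ne']
        · intro y _ hyx
          rw [hS y hyx, mul_zero]
        · intro hx
          exact absurd (Finset.mem_univ x) hx

lemma parseval {π : Fin n → ℝ} (hπpos : ∀ x, 0 < π x) {v : Fin n → Fin n → ℝ}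
    (hortho : ∀ i j, pInner π (v i) (v j) = if i = j then 1 else 0) (f : Fin n → ℝ) :
    pInner π f f = ∑ m, (pInner π f (v m)) ^ 2 := by
  calc pInner π f f = ∑ x, (∑ m, pInner π f (v m) * v m x) * f x * π x := by
        rw [pInner]
        apply Finset.sum_congr rfl
        intro x _
        rw [ortho_complete hπpos hortho f x]
    _ = ∑ x, ∑ m, pInner π f (v m) * v m x * f x * π x := by
        apply Finset.sum_congr rfl
        intro x _
        rw [Finset.sum_mul, Finset.sum_mul]
    _ = ∑ m, ∑ x, pInner π f (v m) * v m x * f x * π x := Finset.sum_comm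
    _ = ∑ m, pInner π f (v m) * (∑ x, f x * v m x * π x) := by
        apply Finset.sum_congr rfl
        intro m _
        rw [Finset.mul_sum]
        apply Finset.sum_congr rfl
        intro x _
        ring
    _ = ∑ m, (pInner π f (v m)) ^ 2 := by
        apply Finset.sum_congr rfl
        intro m _
        rw [← pInner]
        ring

lemma autocov_spectral {π : Fin n → ℝ} {P : Matrix (Fin n) (Fin n) ℝ}
    {v : Fin n → Fin n → ℝ} {lam : Fin n → ℝ} (hπpos : ∀ x, 0 < π x)
    (hortho : ∀ i j, pInner π (v i) (v j) = if i = j then 1 else 0)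
    (heig : ∀ i, P.mulVec (v i) = lam i • v i) (f : Fin n → ℝ) (k : ℕ) :
    autocov π P f k
      = ∑ m, (pInner π (fun x => f x - ∑ z, π z * f z) (v m)) ^ 2 * lam m ^ k := by
  set f0 : Fin n → ℝ := fun x => f x - ∑ z, π z * f z with hf0
  set c : Fin n → ℝ := fun m => pInner π f0 (v m) with hc
  have hPk : ∀ m, (P ^ k).mulVec (v m) = (lam m ^ k) • v m :=
    fun m => mulVec_pow_eig (heig m) k
  have step1 : ∀ x : Fin n, (∑ y, (P ^ k) x y * f0 y) = ∑ m, c m * (lam m ^ k * v m x) := by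
    intro x
    have hrep : ∀ y, f0 y = ∑ m, c m * v m y :=
      fun y => (ortho_complete hπpos hortho f0 y).symm
    calc (∑ y, (P ^ k) x y * f0 y)
        = ∑ y, ∑ m, (P ^ k) x y * (c m * v m y) := by
          apply Finset.sum_congr rfl
          intro y _
          rw [hrep y, Finset.mul_sum]
      _ = ∑ m, ∑ y, (P ^ k) x y * (c m * v m y) := Finset.sum_comm
      _ = ∑ m, c m * ∑ y, (P ^ k) x y * v m y := by
          apply Finset.sum_congr rfl
          intro m _
          rw [Finset.mul_sum]
          apply Finset.sum_congr rfl
          intro y _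
          ring
      _ = ∑ m, c m * (lam m ^ k * v m x) := by
          apply Finset.sum_congr rfl
          intro m _
          have := congrFun (hPk m) x
          simp only [Matrix.mulVec, dotProduct, Pi.smul_apply, smul_eq_mul] at this
          rw [this]
  calc autocov π P f k
      = ∑ x, (π x * f0 x) * ∑ y, (P ^ k) x y * f0 y := by
        rw [autocov]
        apply Finset.sum_congr rfl
        intro x _
        rw [Finset.mul_sum]
        apply Finset.sum_congr rfl
        intro y _
        ring
    _ = ∑ x, ∑ m, (π x * f0 x) * (c m * (lam m ^ k * v m x)) := by
        apply Finset.sum_congr rfl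
        intro x _
        rw [step1 x, Finset.mul_sum]
    _ = ∑ m, ∑ x, (π x * f0 x) * (c m * (lam m ^ k * v m x)) := Finset.sum_comm
    _ = ∑ m, (c m * lam m ^ k) * ∑ x, f0 x * v m x * π x := by
        apply Finset.sum_congr rfl
        intro m _
        rw [Finset.mul_sum]
        apply Finset.sum_congr rfl
        intro x _
        ring
    _ = ∑ m, c m ^ 2 * lam m ^ k := by
        apply Finset.sum_congr rfl
        intro m _
        have : (∑ x, f0 x * v m x * π x) = c m := rfl
        rw [this]
        ring

lemma coeff_zero_of_eig_one {π : Fin n → ℝ} {P : Matrix (Fin n) (Fin n) ℝ}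
    (hπsum : ∑ x, π x = 1) (hP : IsStochastic P) (hirr : MatIrreducible P)
    {w : Fin n → ℝ} (hw : P.mulVec w = w) (f : Fin n → ℝ) :
    pInner π (fun x => f x - ∑ z, π z * f z) w = 0 := by
  have hconst := eig_one_const hP hirr hw
  have hzero : (∑ x, (f x - ∑ z, π z * f z) * π x) = 0 := by
    have h1 : (∑ x, (f x - ∑ z, π z * f z) * π x)
        = (∑ x, f x * π x) - (∑ z, π z * f z) * ∑ x, π x := by
      rw [Finset.mul_sum, ← Finset.sum_sub_distrib]
      apply Finset.sum_congr rfl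
      intro x _
      ring
    rw [h1, hπsum, mul_one]
    have h2 : (∑ x, f x * π x) = ∑ z, π z * f z := by
      apply Finset.sum_congr rfl
      intro x _
      ring
    rw [h2, sub_self]
  rcases Nat.eq_zero_or_pos n with hn | hn
  · subst hn
    simp [pInner]
  · have x0 : Fin n := ⟨0, hn⟩
    calc pInner π (fun x => f x - ∑ z, π z * f z) w
        = ∑ x, (f x - ∑ z, π z * f z) * w x0 * π x := by
          rw [pInner]
          apply Finset.sum_congr rfl
          intro x _
          rw [hconst x x0]
      _ = w x0 * ∑ x, (f x - ∑ z, π z * f z) * π x := by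
          rw [Finset.mul_sum]
          apply Finset.sum_congr rfl
          intro x _
          ring
      _ = 0 := by rw [hzero, mul_zero]

lemma hasAsymptVar_spectral {π : Fin n → ℝ} {P : Matrix (Fin n) (Fin n) ℝ}
    {v : Fin n → Fin n → ℝ} {lam : Fin n → ℝ} (hπpos : ∀ x, 0 < π x) (hπsum : ∑ x, π x = 1)
    (hP : IsStochastic P) (hirr : MatIrreducible P)
    (hortho : ∀ i j, pInner π (v i) (v j) = if i = j then 1 else 0)
    (heig : ∀ i, P.mulVec (v i) = lam i • v i) (f : Fin n → ℝ) :
    HasAsymptVar π P f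
      (∑ m, (pInner π (fun x => f x - ∑ z, π z * f z) (v m)) ^ 2 * gfun (lam m)) := by
  have hvar : ∀ N, varN π P f N
      = ∑ m, (pInner π (fun x => f x - ∑ z, π z * f z) (v m)) ^ 2
          * ((N : ℝ)⁻¹ * ∑ i ∈ Finset.range N, ∑ j ∈ Finset.range N,
              lam m ^ (max i j - min i j)) := by
    intro N
    rw [varN]
    have h1 : (∑ i ∈ Finset.range N, ∑ j ∈ Finset.range N, autocov π P f (max i j - min i j))
        = ∑ m, ∑ i ∈ Finset.range N, ∑ j ∈ Finset.range N,
            (pInner π (fun x => f x - ∑ z, π z * f z) (v m)) ^ 2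
              * lam m ^ (max i j - min i j) := by
      calc (∑ i ∈ Finset.range N, ∑ j ∈ Finset.range N, autocov π P f (max i j - min i j))
          = ∑ i ∈ Finset.range N, ∑ j ∈ Finset.range N, ∑ m,
              (pInner π (fun x => f x - ∑ z, π z * f z) (v m)) ^ 2
                * lam m ^ (max i j - min i j) := by
            apply Finset.sum_congr rfl
            intro i _
            apply Finset.sum_congr rfl
            intro j _
            exact autocov_spectral hπpos hortho heig f _
        _ = ∑ i ∈ Finset.range N, ∑ m, ∑ j ∈ Finset.range N,
              (pInner π (fun x => f x - ∑ z, π z * f z) (v m)) ^ 2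
                * lam m ^ (max i j - min i j) :=
            Finset.sum_congr rfl (fun i _ => Finset.sum_comm)
        _ = ∑ m, ∑ i ∈ Finset.range N, ∑ j ∈ Finset.range N,
              (pInner π (fun x => f x - ∑ z, π z * f z) (v m)) ^ 2
                * lam m ^ (max i j - min i j) := Finset.sum_comm
    rw [h1, Finset.mul_sum]
    apply Finset.sum_congr rfl
    intro m _
    have h2 : (∑ i ∈ Finset.range N, ∑ j ∈ Finset.range N,
        (pInner π (fun x => f x - ∑ z, π z * f z) (v m)) ^ 2 * lam m ^ (max i j - min i j))
        = (pInner π (fun x => f x - ∑ z, π z * f z) (v m)) ^ 2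
            * ∑ i ∈ Finset.range N, ∑ j ∈ Finset.range N, lam m ^ (max i j - min i j) := by
      rw [Finset.mul_sum]
      apply Finset.sum_congr rfl
      intro i _
      rw [Finset.mul_sum]
    rw [h2]
    ring
  apply Tendsto.congr (fun N => (hvar N).symm)
  apply tendsto_finset_sum
  intro m _
  by_cases hm : lam m = 1
  · have hw : P.mulVec (v m) = v m := by rw [heig m, hm, one_smul]
    have hczero : pInner π (fun x => f x - ∑ z, π z * f z) (v m) = 0 :=
      coeff_zero_of_eig_one hπsum hP hirr hw f
    rw [hczero]
    simpa using (tendsto_const_nhds :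
      Tendsto (fun _ : ℕ => (0:ℝ)) atTop (nhds 0))
  · have hb := eig_bound hP (heig m) (v_ne_zero hortho m)
    have hb' := abs_le.mp hb
    have h2 : lam m < 1 := lt_of_le_of_ne hb'.2 hm
    have htd := (TN_tendsto hb'.1 h2).const_mul
      ((pInner π (fun x => f x - ∑ z, π z * f z) (v m)) ^ 2)
    unfold gfun
    exact htd

end Helpers

lemma pInner_const {n : ℕ} {π : Fin n → ℝ} (hπsum : ∑ x, π x = 1) {u w : Fin n → ℝ}
    (hu : ∀ x y, u x = u y) (hw : ∀ x y, w x = w y) (x0 : Fin n) :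
    pInner π u w = u x0 * w x0 := by
  calc pInner π u w = ∑ x, u x0 * w x0 * π x := by
        rw [pInner]
        apply Finset.sum_congr rfl
        intro x _
        rw [hu x x0, hw x x0]
    _ = u x0 * w x0 * ∑ x, π x := by rw [← Finset.mul_sum]
    _ = u x0 * w x0 := by rw [hπsum, mul_one]

theorem stmt11 {n : ℕ} (π : Fin n → ℝ) (P Q : Matrix (Fin n) (Fin n) ℝ)
    (hπpos : ∀ x, 0 < π x) (hπsum : ∑ x, π x = 1)
    (hP : IsStochastic P) (hQ : IsStochastic Q)
    (hirrP : MatIrreducible P) (hirrQ : MatIrreducible Q)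
    (hrevP : IsReversible π P) (hrevQ : IsReversible π Q)
    (vP vQ : Fin n → Fin n → ℝ) (lam beta : Fin n → ℝ)
    (horthoP : ∀ i j, pInner π (vP i) (vP j) = if i = j then 1 else 0)
    (horthoQ : ∀ i j, pInner π (vQ i) (vQ j) = if i = j then 1 else 0)
    (heigP : ∀ i, P.mulVec (vP i) = lam i • vP i)
    (heigQ : ∀ i, Q.mulVec (vQ i) = beta i • vQ i)
    (hlam : Antitone lam) (hbeta : Antitone beta)
    (hdom : EffDom π P Q) :
    ∀ i, lam i ≤ beta i := by
  intro i
  haveI : NeZero n := ⟨(Fin.pos i).ne'⟩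
  have hlamb : ∀ m, |lam m| ≤ 1 := fun m => eig_bound hP (heigP m) (v_ne_zero horthoP m)
  have hbetab : ∀ m, |beta m| ≤ 1 := fun m => eig_bound hQ (heigQ m) (v_ne_zero horthoQ m)
  have hone : ∀ (R : Matrix (Fin n) (Fin n) ℝ) (v : Fin n → Fin n → ℝ) (mu : Fin n → ℝ),
      IsStochastic R → IsReversible π R →
      (∀ a b, pInner π (v a) (v b) = if a = b then 1 else 0) →
      (∀ a, R.mulVec (v a) = mu a • v a) → ∃ m, mu m = 1 := by
    intro R v mu hR hrev hortho heig
    have hR1 : R.mulVec (fun _ => (1:ℝ)) = fun _ => (1:ℝ) := by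
      funext x
      simp [Matrix.mulVec, dotProduct, hR.2 x]
    have hex : ∃ m, pInner π (fun _ => (1:ℝ)) (v m) ≠ 0 := by
      by_contra hcon
      push_neg at hcon
      have h0 := ortho_complete hπpos hortho (fun _ => (1:ℝ)) i
      simp only [hcon, zero_mul, Finset.sum_const_zero] at h0
      exact one_ne_zero h0.symm
    obtain ⟨m, hm⟩ := hex
    have heq : pInner π (fun _ => (1:ℝ)) (v m) = mu m * pInner π (fun _ => (1:ℝ)) (v m) := by
      conv_lhs => rw [← hR1]
      rw [pInner_mulVec hrev, heig m, pInner_smul_right]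
    refine ⟨m, ?_⟩
    have h2 : (mu m - 1) * pInner π (fun _ => (1:ℝ)) (v m) = 0 := by linarith
    rcases mul_eq_zero.mp h2 with h3 | h3
    · linarith
    · exact absurd h3 hm
  obtain ⟨mP, hmP⟩ := hone P vP lam hP hrevP horthoP heigP
  obtain ⟨mQ, hmQ⟩ := hone Q vQ beta hQ hrevQ horthoQ heigQ
  have hlam0 : lam 0 = 1 := by
    refine le_antisymm (abs_le.mp (hlamb 0)).2 ?_
    rw [← hmP]
    exact hlam (Fin.zero_le mP)
  have hbeta0 : beta 0 = 1 := by
    refine le_antisymm (abs_le.mp (hbetab 0)).2 ?_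
    rw [← hmQ]
    exact hbeta (Fin.zero_le mQ)
  have hsimple : ∀ (R : Matrix (Fin n) (Fin n) ℝ) (v : Fin n → Fin n → ℝ) (mu : Fin n → ℝ),
      IsStochastic R → MatIrreducible R →
      (∀ a b, pInner π (v a) (v b) = if a = b then 1 else 0) →
      (∀ a, R.mulVec (v a) = mu a • v a) → mu 0 = 1 →
      ∀ m : Fin n, m ≠ 0 → mu m ≠ 1 := by
    intro R v mu hR hirr hortho heig hmu0 m hm hcon
    have hc0 : ∀ x y, v 0 x = v 0 y := eig_one_const hR hirr (by rw [heig 0, hmu0, one_smul])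
    have hcm : ∀ x y, v m x = v m y := eig_one_const hR hirr (by rw [heig m, hcon, one_smul])
    have h00 : v 0 0 * v 0 0 = 1 := by
      have h := hortho 0 0
      rw [pInner_const hπsum hc0 hc0 0] at h
      simpa using h
    have hmm : v m 0 * v m 0 = 1 := by
      have h := hortho m m
      rw [pInner_const hπsum hcm hcm 0] at h
      simpa using h
    have h0m : v 0 0 * v m 0 = 0 := by
      have h := hortho 0 m
      rw [pInner_const hπsum hc0 hcm 0] at h
      simpa [Ne.symm hm] using h
    rcases mul_eq_zero.mp h0m with h | h
    · rw [h] at h00; norm_num at h00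
    · rw [h] at hmm; norm_num at hmm
  have hlamlt1 : ∀ m : Fin n, m ≠ 0 → lam m < 1 := fun m hm =>
    lt_of_le_of_ne (abs_le.mp (hlamb m)).2 (hsimple P vP lam hP hirrP horthoP heigP hlam0 m hm)
  have hbetalt1 : ∀ m : Fin n, m ≠ 0 → beta m < 1 := fun m hm =>
    lt_of_le_of_ne (abs_le.mp (hbetab m)).2 (hsimple Q vQ beta hQ hirrQ horthoQ heigQ hbeta0 m hm)
  rcases eq_or_ne i 0 with rfl | hi
  · rw [hlam0, hbeta0]
  · classical
    let T : (Fin n → ℝ) →ₗ[ℝ] (Fin n → ℝ) :=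
      { toFun := fun f m => if m < i then pInner π f (vQ m) else
          if i < m then pInner π f (vP m) else 0
        map_add' := by
          intro f g
          funext m
          simp only [Pi.add_apply]
          split_ifs
          · exact pInner_add_left π f g _
          · exact pInner_add_left π f g _
          · norm_num
        map_smul' := by
          intro c f
          funext m
          simp only [Pi.smul_apply, smul_eq_mul, RingHom.id_apply]
          split_ifs
          · exact pInner_smul_left π c f _
          · exact pInner_smul_left π c f _
          · rw [mul_zero] }
    have hker : ∃ f : Fin n → ℝ, f ≠ 0 ∧ T f = 0 := by
      have hne : LinearMap.ker T ≠ ⊥ := by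
        intro hbot
        have hinj : Function.Injective T := LinearMap.ker_eq_bot.mp hbot
        have hsurj : Function.Surjective T := LinearMap.injective_iff_surjective.mp hinj
        obtain ⟨g, hg⟩ := hsurj (fun m => if m = i then (1:ℝ) else 0)
        have h1 := congrFun hg i
        have h2 : T g i = 0 := by
          simp only [T, LinearMap.coe_mk, AddHom.coe_mk, lt_irrefl, if_false]
        rw [h2] at h1
        simp at h1
      obtain ⟨f, hf1, hf2⟩ := (Submodule.ne_bot_iff _).mp hne
      exact ⟨f, hf2, LinearMap.mem_ker.mp hf1⟩
    obtain ⟨f, hfne, hfT⟩ := hker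
    have hfQc : ∀ m : Fin n, m < i → pInner π f (vQ m) = 0 := by
      intro m hm
      have h := congrFun hfT m
      simpa [T, hm] using h
    have hfPc : ∀ m : Fin n, i < m → pInner π f (vP m) = 0 := by
      intro m hm
      have h := congrFun hfT m
      simpa [T, hm, asymm hm] using h
    have hQ0const : ∀ x y, vQ 0 x = vQ 0 y :=
      eig_one_const hQ hirrQ (by rw [heigQ 0, hbeta0, one_smul])
    have hP0const : ∀ x y, vP 0 x = vP 0 y :=
      eig_one_const hP hirrP (by rw [heigP 0, hlam0, one_smul])
    have hQ00 : vQ 0 0 ≠ 0 := by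
      intro h
      have h1 := horthoQ 0 0
      rw [pInner_const hπsum hQ0const hQ0const 0, h] at h1
      norm_num at h1
    have h0lti : (0 : Fin n) < i := (Fin.pos_iff_ne_zero' i).mpr hi
    have hmu : (∑ z, π z * f z) = 0 := by
      have h1 := hfQc 0 h0lti
      have h2 : pInner π f (vQ 0) = vQ 0 0 * ∑ x, π x * f x := by
        rw [pInner, Finset.mul_sum]
        apply Finset.sum_congr rfl
        intro x _
        rw [hQ0const x 0]
        ring
      rw [h2] at h1
      rcases mul_eq_zero.mp h1 with h | h
      · exact absurd h hQ00
      · exact h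
    have hfP0 : pInner π f (vP 0) = 0 := by
      have h2 : pInner π f (vP 0) = vP 0 0 * ∑ x, π x * f x := by
        rw [pInner, Finset.mul_sum]
        apply Finset.sum_congr rfl
        intro x _
        rw [hP0const x 0]
        ring
      rw [h2, hmu, mul_zero]
    have hf0eq : (fun x => f x - ∑ z, π z * f z) = f := by
      funext x
      rw [hmu, sub_zero]
    have hvarP := hasAsymptVar_spectral hπpos hπsum hP hirrP horthoP heigP f
    have hvarQ := hasAsymptVar_spectral hπpos hπsum hQ hirrQ horthoQ heigQ f
    rw [hf0eq] at hvarP hvarQ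
    have hdomf := hdom f _ _ hvarP hvarQ
    have hlow : gfun (lam i) * pInner π f f ≤ ∑ m, (pInner π f (vP m)) ^ 2 * gfun (lam m) := by
      rw [parseval hπpos horthoP f, Finset.mul_sum]
      apply Finset.sum_le_sum
      intro m _
      rcases eq_or_ne m 0 with rfl | hm0
      · rw [hfP0]
        norm_num
      · rcases lt_or_ge i m with him | hmi
        · rw [hfPc m him]
          norm_num
        · have hg : gfun (lam i) ≤ gfun (lam m) :=
            gfun_mono (abs_le.mp (hlamb i)).1 (hlam hmi) (hlamlt1 m hm0)
          rw [mul_comm ((pInner π f (vP m)) ^ 2) (gfun (lam m))]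
          exact mul_le_mul_of_nonneg_right hg (sq_nonneg _)
    have hup : (∑ m, (pInner π f (vQ m)) ^ 2 * gfun (beta m)) ≤ gfun (beta i) * pInner π f f := by
      rw [parseval hπpos horthoQ f, Finset.mul_sum]
      apply Finset.sum_le_sum
      intro m _
      rcases lt_or_ge m i with him | hmi
      · rw [hfQc m him]
        norm_num
      · have hg : gfun (beta m) ≤ gfun (beta i) :=
          gfun_mono (abs_le.mp (hbetab m)).1 (hbeta hmi) (hbetalt1 i hi)
        rw [mul_comm ((pInner π f (vQ m)) ^ 2) (gfun (beta m))]
        exact mul_le_mul_of_nonneg_right hg (sq_nonneg _)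
    have hpos : 0 < pInner π f f := by
      obtain ⟨x0, hx0⟩ : ∃ x, f x ≠ 0 := by
        by_contra hcon
        push_neg at hcon
        exact hfne (funext hcon)
      rw [pInner]
      apply Finset.sum_pos'
      · intro x _
        exact mul_nonneg (mul_self_nonneg (f x)) (hπpos x).le
      · exact ⟨x0, Finset.mem_univ x0, mul_pos (mul_self_pos.mpr hx0) (hπpos x0)⟩
    have hgle : gfun (lam i) ≤ gfun (beta i) :=
      le_of_mul_le_mul_right (le_trans hlow (le_trans hdomf hup)) hpos
    by_contra hcon
    push_neg at hcon
    have := gfun_strict (abs_le.mp (hbetab i)).1 hcon (hlamlt1 i hi)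
    linarith
end

section
/- If P and Q are irreducible transition matrices reversible with respect to π, P efficiency-dominates Q, and P ≠ Q, then trace(P) < trace(Q). -/
open Matrix BigOperators Filter

lemma sum_pow_absdiff (lam : ℝ) (N : ℕ) :
    (∑ i ∈ Finset.range N, ∑ j ∈ Finset.range N, lam ^ (max i j - min i j)) * (1 - lam)^2
      = N * (1 - lam^2) - 2*lam + 2 * lam^(N+1) := by
  induction N with
  | zero => simp
  | succ N ih =>
    have hrow : ∀ i, i ∈ Finset.range N → lam ^ (max i N - min i N) = lam ^ (N - i) := by
      intro i hi
      rw [Finset.mem_range] at hi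
      rw [max_comm, max_eq_left hi.le, min_eq_left hi.le]
    have hG : (∑ i ∈ Finset.range N, lam ^ (N - i)) * (1 - lam) = lam - lam ^ (N+1) := by
      have : (∑ i ∈ Finset.range N, lam ^ (N - i)) = ∑ i ∈ Finset.range N, lam ^ (i+1) := by
        rw [← Finset.sum_range_reflect]
        apply Finset.sum_congr rfl
        intro j hj
        rw [Finset.mem_range] at hj
        congr 1
        omega
      rw [this]
      have h2 : (∑ i ∈ Finset.range N, lam ^ (i+1)) = lam * ∑ i ∈ Finset.range N, lam ^ i := by
        rw [Finset.mul_sum]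
        exact Finset.sum_congr rfl fun i _ => by ring
      rw [h2]
      have := geom_sum_mul lam N
      have hpow : lam ^ (N+1) = lam ^ N * lam := by ring
      nlinarith [this]
    rw [Finset.sum_range_succ]
    have hinner : ∀ i, (∑ j ∈ Finset.range (N+1), lam ^ (max i j - min i j))
        = (∑ j ∈ Finset.range N, lam ^ (max i j - min i j)) + lam ^ (max i N - min i N) := by
      intro i; rw [Finset.sum_range_succ]
    calc (∑ i ∈ Finset.range N, ∑ j ∈ Finset.range (N+1), lam ^ (max i j - min i j)
          + ∑ j ∈ Finset.range (N+1), lam ^ (max N j - min N j)) * (1-lam)^2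
        = ((∑ i ∈ Finset.range N, ∑ j ∈ Finset.range N, lam ^ (max i j - min i j))
          + (∑ i ∈ Finset.range N, lam ^ (N - i))
          + ((∑ j ∈ Finset.range N, lam ^ (N - j)) + 1)) * (1-lam)^2 := by
          congr 2
          · rw [← Finset.sum_add_distrib]
            apply Finset.sum_congr rfl
            intro i hi
            rw [hinner i, hrow i hi]
          · rw [Finset.sum_range_succ]
            simp only [max_self, min_self, Nat.sub_self, pow_zero]
            congr 1
            apply Finset.sum_congr rfl
            intro j hj
            rw [Finset.mem_range] at hj
            rw [max_eq_left hj.le, min_eq_right hj.le]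
      _ = ((N+1 : ℕ) : ℝ) * (1 - lam^2) - 2*lam + 2 * lam^(N+1+1) := by
          push_cast
          linear_combination ih + 2*(1-lam)*hG

lemma tendsto_hN {lam : ℝ} (h1 : |lam| ≤ 1) (h2 : lam ≠ 1) :
    Tendsto (fun N : ℕ => (N:ℝ)⁻¹ * ∑ i ∈ Finset.range N, ∑ j ∈ Finset.range N,
      lam ^ (max i j - min i j)) atTop (nhds ((1+lam)/(1-lam))) := by
  have hd : (1 : ℝ) - lam ≠ 0 := sub_ne_zero.mpr (Ne.symm h2)
  have key : ∀ N : ℕ, 1 ≤ N → (N:ℝ)⁻¹ * ∑ i ∈ Finset.range N, ∑ j ∈ Finset.range N,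
      lam ^ (max i j - min i j)
      = (1+lam)/(1-lam) + (N:ℝ)⁻¹ * ((2*lam^(N+1) - 2*lam)/(1-lam)^2) := by
    intro N hN
    have hN0 : (N:ℝ) ≠ 0 := Nat.cast_ne_zero.mpr (by omega)
    have hS : (∑ i ∈ Finset.range N, ∑ j ∈ Finset.range N, lam ^ (max i j - min i j))
        = ((N:ℝ) * (1 - lam^2) - 2*lam + 2*lam^(N+1))/(1-lam)^2 := by
      rw [eq_div_iff (pow_ne_zero 2 hd)]
      exact sum_pow_absdiff lam N
    rw [hS]
    field_simp
    ring
  have h0 : Tendsto (fun N : ℕ => (N:ℝ)⁻¹ * ((2*lam^(N+1) - 2*lam)/(1-lam)^2)) atTop (nhds 0) := by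
    apply squeeze_zero_norm (a := fun N : ℕ => (N:ℝ)⁻¹ * (4/(1-lam)^2))
    · intro N
      rw [norm_mul, norm_inv, Real.norm_natCast]
      have h4 : ‖(2*lam^(N+1) - 2*lam)/(1-lam)^2‖ ≤ 4/(1-lam)^2 := by
        rw [norm_div, norm_pow]
        have hnum : ‖2*lam^(N+1) - 2*lam‖ ≤ 4 := by
          have := abs_le.mp h1
          have hp : |lam| ^ (N+1) ≤ 1 := pow_le_one₀ (abs_nonneg _) h1
          rw [Real.norm_eq_abs]
          have := abs_sub (2*lam^(N+1)) (2*lam)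
          have h1' : |2*lam^(N+1)| ≤ 2 := by
            rw [abs_mul, abs_pow, abs_two]; nlinarith [abs_nonneg lam]
          have h2' : |2*lam| ≤ 2 := by rw [abs_mul, abs_two]; nlinarith [abs_nonneg lam]
          calc |2*lam^(N+1) - 2*lam| ≤ |2*lam^(N+1)| + |2*lam| := abs_sub _ _
            _ ≤ 4 := by linarith
        have hpos : (0:ℝ) < ‖1-lam‖^2 := pow_pos (norm_pos_iff.mpr hd) 2
        calc ‖2*lam^(N+1) - 2*lam‖/‖1-lam‖^2 ≤ 4/‖1-lam‖^2 := by gcongr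
          _ = 4/(1-lam)^2 := by rw [Real.norm_eq_abs, sq_abs]
      exact mul_le_mul_of_nonneg_left h4 (by positivity)
    · simpa using (tendsto_inv_atTop_nhds_zero_nat : Tendsto (fun N : ℕ => (N:ℝ)⁻¹) atTop (nhds 0)).mul_const (4/(1-lam)^2)
  have hT : Tendsto (fun N : ℕ => (1+lam)/(1-lam) + (N:ℝ)⁻¹ * ((2*lam^(N+1) - 2*lam)/(1-lam)^2))
      atTop (nhds ((1+lam)/(1-lam))) := by
    simpa using tendsto_const_nhds.add h0
  apply hT.congr'
  filter_upwards [eventually_ge_atTop 1] with N hN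
  exact (key N hN).symm

noncomputable section
namespace S14

variable {n : ℕ}

def Amat (π : Fin n → ℝ) (P : Matrix (Fin n) (Fin n) ℝ) : Matrix (Fin n) (Fin n) ℝ :=
  Matrix.of fun x y => Real.sqrt (π x) * P x y * (Real.sqrt (π y))⁻¹

section facts
variable {π : Fin n → ℝ} {P : Matrix (Fin n) (Fin n) ℝ}

lemma sqpos (hπpos : ∀ x, 0 < π x) (x : Fin n) : 0 < Real.sqrt (π x) :=
  Real.sqrt_pos.mpr (hπpos x)

lemma sqsq (hπpos : ∀ x, 0 < π x) (x : Fin n) :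
    Real.sqrt (π x) * Real.sqrt (π x) = π x := Real.mul_self_sqrt (hπpos x).le

lemma Amat_eq (hπpos : ∀ x, 0 < π x) (x y : Fin n) :
    Amat π P x y = (π x * P x y) / (Real.sqrt (π x) * Real.sqrt (π y)) := by
  have hx := (sqpos hπpos x).ne'
  have hy := (sqpos hπpos y).ne'
  show Real.sqrt (π x) * P x y * (Real.sqrt (π y))⁻¹ = _
  rw [← sqsq hπpos x]
  rw [Real.sqrt_mul_self (sqpos hπpos x).le]
  field_simp

lemma Amat_symm (hπpos : ∀ x, 0 < π x) (hrev : ∀ x y, π x * P x y = π y * P y x)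
    (x y : Fin n) : Amat π P y x = Amat π P x y := by
  rw [Amat_eq hπpos, Amat_eq hπpos, ← hrev x y, mul_comm (Real.sqrt (π y))]

lemma Amat_herm (hπpos : ∀ x, 0 < π x) (hrev : ∀ x y, π x * P x y = π y * P y x) :
    (Amat π P).IsHermitian := by
  ext x y
  simp only [Matrix.conjTranspose_apply, star_trivial]
  exact (Amat_symm hπpos hrev y x).symm

lemma Apow (hπpos : ∀ x, 0 < π x) (k : ℕ) (x y : Fin n) :
    ((Amat π P) ^ k) x y = Real.sqrt (π x) * ((P ^ k) x y) * (Real.sqrt (π y))⁻¹ := by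
  induction k generalizing x y with
  | zero =>
    by_cases h : x = y
    · subst h
      simp [Matrix.one_apply_eq, (sqpos hπpos x).ne']
    · simp [Matrix.one_apply_ne h]
  | succ k ih =>
    rw [pow_succ, pow_succ, Matrix.mul_apply, Matrix.mul_apply]
    have : ∀ z : Fin n, ((Amat π P) ^ k) x z * (Amat π P) z y
        = Real.sqrt (π x) * ((P ^ k) x z * P z y) * (Real.sqrt (π y))⁻¹ := by
      intro z
      rw [ih]
      show _ * (Real.sqrt (π z) * P z y * (Real.sqrt (π y))⁻¹) = _
      have hz : (Real.sqrt (π z))⁻¹ * Real.sqrt (π z) = 1 :=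
        inv_mul_cancel₀ (sqpos hπpos z).ne'
      linear_combination (Real.sqrt (π x) * (P ^ k) x z * P z y * (Real.sqrt (π y))⁻¹) * hz
    rw [Finset.sum_congr rfl fun z _ => this z, ← Finset.sum_mul, ← Finset.mul_sum]

lemma Asp (hπpos : ∀ x, 0 < π x) (hPsum : ∀ x, ∑ y, P x y = 1) :
    (Amat π P) *ᵥ (fun x => Real.sqrt (π x)) = fun x => Real.sqrt (π x) := by
  funext x
  show (∑ y, Amat π P x y * Real.sqrt (π y)) = Real.sqrt (π x)
  have : ∀ y : Fin n, Amat π P x y * Real.sqrt (π y) = Real.sqrt (π x) * P x y := by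
    intro y
    show Real.sqrt (π x) * P x y * (Real.sqrt (π y))⁻¹ * Real.sqrt (π y) = _
    have hy := (sqpos hπpos y).ne'
    field_simp
  rw [Finset.sum_congr rfl fun y _ => this y, ← Finset.mul_sum, hPsum x, mul_one]

lemma transfer (hπpos : ∀ x, 0 < π x) {u : Fin n → ℝ} {μ : ℝ}
    (hu : Amat π P *ᵥ u = μ • u) :
    P *ᵥ (fun x => (Real.sqrt (π x))⁻¹ * u x) = μ • fun x => (Real.sqrt (π x))⁻¹ * u x := by
  funext x
  have hx := (sqpos hπpos x).ne'
  have h := congrFun hu x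
  simp only [Matrix.mulVec, dotProduct, Pi.smul_apply, smul_eq_mul] at h ⊢
  have hfac : (∑ y, Amat π P x y * u y)
      = Real.sqrt (π x) * ∑ y, P x y * ((Real.sqrt (π y))⁻¹ * u y) := by
    rw [Finset.mul_sum]
    refine Finset.sum_congr rfl fun y _ => ?_
    show Real.sqrt (π x) * P x y * (Real.sqrt (π y))⁻¹ * u y = _
    ring
  rw [hfac] at h
  apply mul_left_cancel₀ hx
  rw [h]
  field_simp

lemma pow_entry_nonneg (hP : ∀ x y, 0 ≤ P x y) (k : ℕ) (x y : Fin n) :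
    0 ≤ (P ^ k) x y := by
  induction k generalizing x y with
  | zero =>
    rw [pow_zero, Matrix.one_apply]
    split <;> norm_num
  | succ k ih =>
    rw [pow_succ, Matrix.mul_apply]
    exact Finset.sum_nonneg fun z _ => mul_nonneg (ih x z) (hP z y)

lemma fixed_const [NeZero n] (hP : ∀ x y, 0 ≤ P x y) (hPsum : ∀ x, ∑ y, P x y = 1)
    (hirr : MatIrreducible P) {w : Fin n → ℝ} (hw : P *ᵥ w = w) :
    ∃ c, ∀ x, w x = c := by
  obtain ⟨x0, -, hx0⟩ := Finset.exists_max_image Finset.univ w Finset.univ_nonempty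
  refine ⟨w x0, fun x => ?_⟩
  have step : ∀ z, w z = w x0 → ∀ y, 0 < P z y → w y = w x0 := by
    intro z hz y hpy
    have h2 : (∑ y, P z y * w y) = w z := by
      have := congrFun hw z
      simpa [Matrix.mulVec, dotProduct] using this
    have hsum : ∑ y, P z y * (w x0 - w y) = 0 := by
      have h1 : ∑ y, P z y * (w x0 - w y)
          = (∑ y, P z y) * w x0 - ∑ y, P z y * w y := by
        rw [Finset.sum_mul, ← Finset.sum_sub_distrib]
        exact Finset.sum_congr rfl fun y _ => by ring
      rw [h1, hPsum z, h2, hz]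
      ring
    have hall := (Finset.sum_eq_zero_iff_of_nonneg fun y _ =>
      mul_nonneg (hP z y) (sub_nonneg.mpr (hx0 y (Finset.mem_univ y)))).mp hsum
    have h3 := hall y (Finset.mem_univ y)
    rcases mul_eq_zero.mp h3 with h | h
    · exact absurd h hpy.ne'
    · linarith [sub_eq_zero.mp h]
  have powstep : ∀ k z y, w z = w x0 → 0 < (P ^ k) z y → w y = w x0 := by
    intro k
    induction k with
    | zero =>
      intro z y hz hpos
      rw [pow_zero, Matrix.one_apply] at hpos
      by_cases h : z = y
      · exact h ▸ hz
      · simp [h] at hpos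
    | succ k ih =>
      intro z y hz hpos
      rw [pow_succ, Matrix.mul_apply] at hpos
      have hex : ∃ z', 0 < (P ^ k) z z' * P z' y := by
        by_contra hcon
        push_neg at hcon
        have : (∑ z', (P ^ k) z z' * P z' y) ≤ 0 :=
          Finset.sum_nonpos fun z' _ => hcon z'
        linarith
      obtain ⟨z', hz'⟩ := hex
      have ha := pow_entry_nonneg hP k z z'
      have hb := hP z' y
      rcases mul_pos_iff.mp hz' with ⟨h1, h2⟩ | ⟨h1, _⟩
      · exact step z' (ih z z' hz h1) y h2
      · linarith
  obtain ⟨k, hk⟩ := hirr x0 x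
  exact powstep k x0 x rfl hk

lemma eig_abs_le [NeZero n] (hπpos : ∀ x, 0 < π x)
    (hP : ∀ x y, 0 ≤ P x y) (hPsum : ∀ x, ∑ y, P x y = 1)
    {u : Fin n → ℝ} {μ : ℝ} (hu : Amat π P *ᵥ u = μ • u) (hune : u ≠ 0) :
    |μ| ≤ 1 := by
  set w : Fin n → ℝ := fun x => (Real.sqrt (π x))⁻¹ * u x with hwdef
  have hw : P *ᵥ w = μ • w := transfer hπpos hu
  obtain ⟨x0, -, hx0⟩ :=
    Finset.exists_max_image Finset.univ (fun x => |w x|) Finset.univ_nonempty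
  have hM : 0 < |w x0| := by
    obtain ⟨x, hx⟩ := Function.ne_iff.mp hune
    have hwx : w x ≠ 0 := by
      simp only [hwdef]
      exact mul_ne_zero (inv_ne_zero (sqpos hπpos x).ne') hx
    calc 0 < |w x| := abs_pos.mpr hwx
      _ ≤ |w x0| := hx0 x (Finset.mem_univ x)
  have h := congrFun hw x0
  simp only [Matrix.mulVec, dotProduct, Pi.smul_apply, smul_eq_mul] at h
  have hle : |μ| * |w x0| ≤ |w x0| := by
    calc |μ| * |w x0| = |μ * w x0| := (abs_mul μ (w x0)).symm
      _ = |∑ y, P x0 y * w y| := by rw [h]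
      _ ≤ ∑ y, |P x0 y * w y| := Finset.abs_sum_le_sum_abs _ _
      _ ≤ ∑ y, P x0 y * |w x0| := by
          refine Finset.sum_le_sum fun y _ => ?_
          rw [abs_mul, abs_of_nonneg (hP x0 y)]
          exact mul_le_mul_of_nonneg_left (hx0 y (Finset.mem_univ y)) (hP x0 y)
      _ = |w x0| := by rw [← Finset.sum_mul, hPsum x0, one_mul]
  nlinarith

end facts

section spectral
variable {π : Fin n → ℝ} {P : Matrix (Fin n) (Fin n) ℝ}

def coef (hA : (Amat π P).IsHermitian) (g : Fin n → ℝ) (m : Fin n) : ℝ :=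
  ∑ x, hA.eigenvectorBasis m x * g x

lemma expansion (hA : (Amat π P).IsHermitian) (g : Fin n → ℝ) (x : Fin n) :
    g x = ∑ m, coef hA g m * hA.eigenvectorBasis m x := by
  have h := hA.eigenvectorBasis.sum_repr' ((WithLp.equiv 2 _).symm g)
  have h2 := congrFun (congrArg (WithLp.equiv 2 (Fin n → ℝ)) h) x
  simp only [coef]
  simpa [PiLp.inner_apply, Finset.sum_apply, mul_comm] using h2.symm

lemma pairing (hA : (Amat π P).IsHermitian) (h g : Fin n → ℝ) :
    ∑ x, h x * g x = ∑ m, coef hA h m * coef hA g m := by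
  calc ∑ x, h x * g x
      = ∑ x, (∑ m, coef hA h m * hA.eigenvectorBasis m x) * g x :=
        Finset.sum_congr rfl fun x _ => by rw [← expansion hA h x]
    _ = ∑ x, ∑ m, coef hA h m * (hA.eigenvectorBasis m x * g x) := by
        refine Finset.sum_congr rfl fun x _ => ?_
        rw [Finset.sum_mul]
        exact Finset.sum_congr rfl fun m _ => by ring
    _ = ∑ m, ∑ x, coef hA h m * (hA.eigenvectorBasis m x * g x) := Finset.sum_comm
    _ = ∑ m, coef hA h m * coef hA g m := by
        refine Finset.sum_congr rfl fun m _ => ?_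
        rw [← Finset.mul_sum]
        rfl

lemma eig_pow (hA : (Amat π P).IsHermitian) (k : ℕ) (m : Fin n) :
    ((Amat π P) ^ k) *ᵥ ⇑(hA.eigenvectorBasis m)
      = ((hA.eigenvalues m) ^ k) • ⇑(hA.eigenvectorBasis m) := by
  induction k with
  | zero => simp [Matrix.one_mulVec]
  | succ k ih =>
    rw [pow_succ', ← Matrix.mulVec_mulVec, ih, Matrix.mulVec_smul,
      hA.mulVec_eigenvectorBasis, smul_smul, ← pow_succ]

lemma quad_pow (hA : (Amat π P).IsHermitian) (g : Fin n → ℝ) (k : ℕ) :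
    (∑ x, ∑ y, g x * ((Amat π P) ^ k) x y * g y)
      = ∑ m, (coef hA g m) ^ 2 * (hA.eigenvalues m) ^ k := by
  have hAg : ∀ x, (∑ y, ((Amat π P) ^ k) x y * g y)
      = ∑ m, coef hA g m * ((hA.eigenvalues m) ^ k * hA.eigenvectorBasis m x) := by
    intro x
    calc ∑ y, ((Amat π P) ^ k) x y * g y
        = ∑ y, ((Amat π P) ^ k) x y * ∑ m, coef hA g m * hA.eigenvectorBasis m y :=
          Finset.sum_congr rfl fun y _ => by rw [← expansion hA g y]
      _ = ∑ y, ∑ m, coef hA g m * (((Amat π P) ^ k) x y * hA.eigenvectorBasis m y) := by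
          refine Finset.sum_congr rfl fun y _ => ?_
          rw [Finset.mul_sum]
          exact Finset.sum_congr rfl fun m _ => by ring
      _ = ∑ m, ∑ y, coef hA g m * (((Amat π P) ^ k) x y * hA.eigenvectorBasis m y) :=
          Finset.sum_comm
      _ = ∑ m, coef hA g m * ((hA.eigenvalues m) ^ k * hA.eigenvectorBasis m x) := by
          refine Finset.sum_congr rfl fun m _ => ?_
          rw [← Finset.mul_sum]
          congr 1
          have := congrFun (eig_pow hA k m) x
          simpa [Matrix.mulVec, dotProduct] using this
  calc ∑ x, ∑ y, g x * ((Amat π P) ^ k) x y * g y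
      = ∑ x, g x * ∑ y, ((Amat π P) ^ k) x y * g y := by
        refine Finset.sum_congr rfl fun x _ => ?_
        rw [Finset.mul_sum]
        exact Finset.sum_congr rfl fun y _ => by ring
    _ = ∑ x, ∑ m, coef hA g m * ((hA.eigenvalues m) ^ k * (hA.eigenvectorBasis m x * g x)) := by
        refine Finset.sum_congr rfl fun x _ => ?_
        rw [hAg x, Finset.mul_sum]
        exact Finset.sum_congr rfl fun m _ => by ring
    _ = ∑ m, ∑ x, coef hA g m * ((hA.eigenvalues m) ^ k * (hA.eigenvectorBasis m x * g x)) :=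
        Finset.sum_comm
    _ = ∑ m, (coef hA g m) ^ 2 * (hA.eigenvalues m) ^ k := by
        refine Finset.sum_congr rfl fun m _ => ?_
        have hx : ∀ x, coef hA g m * ((hA.eigenvalues m) ^ k * (hA.eigenvectorBasis m x * g x))
            = (coef hA g m * (hA.eigenvalues m) ^ k) * (hA.eigenvectorBasis m x * g x) :=
          fun x => by ring
        rw [Finset.sum_congr rfl fun x _ => hx x, ← Finset.mul_sum]
        show (coef hA g m * _) * coef hA g m = _
        ring

lemma coef_mulVec (hπpos : ∀ x, 0 < π x) (hrev : ∀ x y, π x * P x y = π y * P y x)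
    (hA : (Amat π P).IsHermitian) (h : Fin n → ℝ) (m : Fin n) :
    coef hA (Amat π P *ᵥ h) m = hA.eigenvalues m * coef hA h m := by
  unfold coef
  calc ∑ x, hA.eigenvectorBasis m x * (Amat π P *ᵥ h) x
      = ∑ x, ∑ y, hA.eigenvectorBasis m x * (Amat π P x y * h y) := by
        refine Finset.sum_congr rfl fun x _ => ?_
        show hA.eigenvectorBasis m x * (∑ y, Amat π P x y * h y) = _
        rw [Finset.mul_sum]
    _ = ∑ y, ∑ x, hA.eigenvectorBasis m x * (Amat π P x y * h y) := Finset.sum_comm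
    _ = ∑ y, ((Amat π P *ᵥ ⇑(hA.eigenvectorBasis m)) y) * h y := by
        refine Finset.sum_congr rfl fun y _ => ?_
        show _ = (∑ x, Amat π P y x * hA.eigenvectorBasis m x) * h y
        rw [Finset.sum_mul]
        refine Finset.sum_congr rfl fun x _ => ?_
        rw [Amat_symm hπpos hrev y x]
        ring
    _ = ∑ y, (hA.eigenvalues m * hA.eigenvectorBasis m y) * h y := by
        refine Finset.sum_congr rfl fun y _ => ?_
        rw [hA.mulVec_eigenvectorBasis]
        rfl
    _ = hA.eigenvalues m * ∑ y, hA.eigenvectorBasis m y * h y := by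
        rw [Finset.mul_sum]
        exact Finset.sum_congr rfl fun y _ => by ring

end spectral

section chain
variable {π : Fin n → ℝ} {P : Matrix (Fin n) (Fin n) ℝ}

def sfun (lam : ℝ) : ℝ := if lam = 1 then 0 else (1+lam)/(1-lam)

def tfun (lam : ℝ) : ℝ := if lam = 1 then 0 else (1-lam)⁻¹

def gv (π : Fin n → ℝ) (f : Fin n → ℝ) : Fin n → ℝ :=
  fun x => Real.sqrt (π x) * (f x - ∑ z, π z * f z)

lemma gv_perp (hπpos : ∀ x, 0 < π x) (hπsum : ∑ x, π x = 1) (f : Fin n → ℝ) :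
    ∑ x, Real.sqrt (π x) * gv π f x = 0 := by
  have h : ∀ x, Real.sqrt (π x) * gv π f x = π x * f x - π x * (∑ z, π z * f z) := by
    intro x
    unfold gv
    rw [← mul_assoc, sqsq hπpos x]
    ring
  rw [Finset.sum_congr rfl fun x _ => h x, Finset.sum_sub_distrib, ← Finset.sum_mul,
    hπsum, one_mul, sub_self]

lemma autocov_eq (hπpos : ∀ x, 0 < π x) (f : Fin n → ℝ) (k : ℕ) :
    autocov π P f k = ∑ x, ∑ y, gv π f x * ((Amat π P) ^ k) x y * gv π f y := by
  unfold autocov gv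
  refine Finset.sum_congr rfl fun x _ => Finset.sum_congr rfl fun y _ => ?_
  rw [Apow hπpos]
  have hy : (Real.sqrt (π y))⁻¹ * Real.sqrt (π y) = 1 := inv_mul_cancel₀ (sqpos hπpos y).ne'
  have h2x := sqsq hπpos x
  linear_combination
    (-((f x - ∑ z, π z * f z) * (P ^ k) x y * (f y - ∑ z, π z * f z))) * h2x +
    (-((f x - ∑ z, π z * f z) * (P ^ k) x y * (f y - ∑ z, π z * f z)
        * Real.sqrt (π x) * Real.sqrt (π x))) * hy

lemma basis_ne_zero (hA : (Amat π P).IsHermitian) (m : Fin n) :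
    (⇑(hA.eigenvectorBasis m) : Fin n → ℝ) ≠ 0 := by
  intro h0
  apply hA.eigenvectorBasis.orthonormal.ne_zero m
  ext x
  exact congrFun h0 x

lemma eig_bound [NeZero n] (hπpos : ∀ x, 0 < π x)
    (hPnn : ∀ x y, 0 ≤ P x y) (hPsum : ∀ x, ∑ y, P x y = 1)
    (hA : (Amat π P).IsHermitian) (m : Fin n) : |hA.eigenvalues m| ≤ 1 :=
  eig_abs_le hπpos hPnn hPsum (hA.mulVec_eigenvectorBasis m) (basis_ne_zero hA m)

lemma coef_eig_one [NeZero n] (hπpos : ∀ x, 0 < π x)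
    (hPnn : ∀ x y, 0 ≤ P x y) (hPsum : ∀ x, ∑ y, P x y = 1) (hirr : MatIrreducible P)
    (hA : (Amat π P).IsHermitian) {m : Fin n} (hm : hA.eigenvalues m = 1)
    {g : Fin n → ℝ} (hg : ∑ x, Real.sqrt (π x) * g x = 0) :
    coef hA g m = 0 := by
  have hu := hA.mulVec_eigenvectorBasis m
  rw [hm] at hu
  have hw := transfer hπpos hu
  rw [one_smul] at hw
  obtain ⟨c, hc⟩ := fixed_const hPnn hPsum hirr hw
  have hb : ∀ x, hA.eigenvectorBasis m x = c * Real.sqrt (π x) := by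
    intro x
    have h1 := hc x
    have hx := (sqpos hπpos x).ne'
    field_simp at h1
    linear_combination h1
  unfold coef
  rw [Finset.sum_congr rfl fun x _ => by rw [hb x]]
  have h2 : ∀ x : Fin n, (c * Real.sqrt (π x)) * g x = c * (Real.sqrt (π x) * g x) :=
    fun x => by ring
  rw [Finset.sum_congr rfl fun x _ => h2 x, ← Finset.mul_sum, hg, mul_zero]

def vval (hA : (Amat π P).IsHermitian) (f : Fin n → ℝ) : ℝ :=
  ∑ m, (coef hA (gv π f) m) ^ 2 * sfun (hA.eigenvalues m)

lemma hasvar [NeZero n] (hπpos : ∀ x, 0 < π x) (hπsum : ∑ x, π x = 1)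
    (hPnn : ∀ x y, 0 ≤ P x y) (hPsum : ∀ x, ∑ y, P x y = 1) (hirr : MatIrreducible P)
    (hA : (Amat π P).IsHermitian) (f : Fin n → ℝ) :
    HasAsymptVar π P f (vval hA f) := by
  have hvar : ∀ N : ℕ, varN π P f N
      = ∑ m, (coef hA (gv π f) m) ^ 2 * ((N:ℝ)⁻¹ * ∑ i ∈ Finset.range N,
          ∑ j ∈ Finset.range N, (hA.eigenvalues m) ^ (max i j - min i j)) := by
    intro N
    unfold varN
    have h1 : ∀ i j : ℕ, autocov π P f (max i j - min i j)
        = ∑ m, (coef hA (gv π f) m) ^ 2 * (hA.eigenvalues m) ^ (max i j - min i j) := by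
      intro i j
      rw [autocov_eq hπpos, quad_pow]
    have h2 : (∑ i ∈ Finset.range N, ∑ j ∈ Finset.range N,
          autocov π P f (max i j - min i j))
        = ∑ m, (coef hA (gv π f) m) ^ 2 * ∑ i ∈ Finset.range N, ∑ j ∈ Finset.range N,
            (hA.eigenvalues m) ^ (max i j - min i j) := by
      rw [Finset.sum_congr rfl fun i _ => Finset.sum_congr rfl fun j _ => h1 i j]
      rw [Finset.sum_congr rfl fun i (_ : i ∈ Finset.range N) => Finset.sum_comm]
      rw [Finset.sum_comm]
      refine Finset.sum_congr rfl fun m _ => ?_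
      simp_rw [← Finset.mul_sum]
    rw [h2, Finset.mul_sum]
    exact Finset.sum_congr rfl fun m _ => by ring
  apply Tendsto.congr (fun N => (hvar N).symm)
  apply tendsto_finset_sum
  intro m _
  by_cases hm : hA.eigenvalues m = 1
  · have hc : coef hA (gv π f) m = 0 :=
      coef_eig_one hπpos hPnn hPsum hirr hA hm (gv_perp hπpos hπsum f)
    simp only [hc, sfun, hm, if_pos, ne_eq, zero_pow, OfNat.ofNat_ne_zero,
      not_false_eq_true, zero_mul, if_true]
    exact tendsto_const_nhds
  · have habs := eig_bound hπpos hPnn hPsum hA m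
    have ht := (tendsto_hN habs hm).const_mul ((coef hA (gv π f) m) ^ 2)
    have hs : sfun (hA.eigenvalues m) = (1 + hA.eigenvalues m)/(1 - hA.eigenvalues m) :=
      if_neg hm
    rw [hs]
    exact ht

def wq (hA : (Amat π P).IsHermitian) (g : Fin n → ℝ) : ℝ :=
  ∑ m, (coef hA g m) ^ 2 * tfun (hA.eigenvalues m)

lemma vval_eq [NeZero n] (hπpos : ∀ x, 0 < π x)
    (hPnn : ∀ x y, 0 ≤ P x y) (hPsum : ∀ x, ∑ y, P x y = 1) (hirr : MatIrreducible P)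
    (hA : (Amat π P).IsHermitian) {g : Fin n → ℝ}
    (hg : ∑ x, Real.sqrt (π x) * g x = 0) :
    ∑ m, (coef hA g m) ^ 2 * sfun (hA.eigenvalues m)
      = 2 * wq hA g - ∑ x, g x * g x := by
  rw [pairing hA g g]
  unfold wq
  rw [Finset.mul_sum, ← Finset.sum_sub_distrib]
  refine Finset.sum_congr rfl fun m _ => ?_
  by_cases hm : hA.eigenvalues m = 1
  · have hc := coef_eig_one hπpos hPnn hPsum hirr hA hm hg
    simp [hc]
  · rw [sfun, tfun, if_neg hm, if_neg hm]
    have hne : (1:ℝ) - hA.eigenvalues m ≠ 0 := sub_ne_zero.mpr (Ne.symm hm)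
    field_simp
    ring

lemma var_ineq [NeZero n] (hπpos : ∀ x, 0 < π x)
    (hPnn : ∀ x y, 0 ≤ P x y) (hPsum : ∀ x, ∑ y, P x y = 1) (hirr : MatIrreducible P)
    (hA : (Amat π P).IsHermitian) (h g : Fin n → ℝ)
    (hg : ∑ x, Real.sqrt (π x) * g x = 0) :
    2 * (∑ x, h x * g x) - ((∑ x, h x * h x) - ∑ x, ∑ y, h x * Amat π P x y * h y)
      ≤ wq hA g := by
  have hq : (∑ x, ∑ y, h x * Amat π P x y * h y)
      = ∑ m, (coef hA h m) ^ 2 * hA.eigenvalues m := by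
    have := quad_pow hA h 1
    simpa [pow_one] using this
  rw [pairing hA h g, pairing hA h h, hq]
  unfold wq
  rw [Finset.mul_sum, ← Finset.sum_sub_distrib, ← Finset.sum_sub_distrib]
  refine Finset.sum_le_sum fun m _ => ?_
  by_cases hm : hA.eigenvalues m = 1
  · have hc := coef_eig_one hπpos hPnn hPsum hirr hA hm hg
    simp [hc, hm]
    exact le_of_eq (pow_two _)
  · have habs := eig_bound hπpos hPnn hPsum hA m
    have hb : 0 < 1 - hA.eigenvalues m := by
      rcases abs_le.mp habs with ⟨-, h2⟩
      cases lt_or_eq_of_le h2 with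
      | inl h3 => linarith
      | inr h3 => exact absurd h3 hm
    rw [tfun, if_neg hm, ← div_eq_mul_inv, le_div_iff₀ hb]
    nlinarith [sq_nonneg (coef hA g m - (1 - hA.eigenvalues m) * coef hA h m)]

lemma B_perp (hπpos : ∀ x, 0 < π x) (hrev : ∀ x y, π x * P x y = π y * P y x)
    (hPsum : ∀ x, ∑ y, P x y = 1) (h : Fin n → ℝ) :
    ∑ x, Real.sqrt (π x) * (h x - (Amat π P *ᵥ h) x) = 0 := by
  have key : ∑ x, Real.sqrt (π x) * (Amat π P *ᵥ h) x = ∑ y, Real.sqrt (π y) * h y := by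
    calc ∑ x, Real.sqrt (π x) * (Amat π P *ᵥ h) x
        = ∑ x, ∑ y, Real.sqrt (π x) * (Amat π P x y * h y) := by
          refine Finset.sum_congr rfl fun x _ => ?_
          show Real.sqrt (π x) * (∑ y, Amat π P x y * h y) = _
          rw [Finset.mul_sum]
      _ = ∑ y, ∑ x, Real.sqrt (π x) * (Amat π P x y * h y) := Finset.sum_comm
      _ = ∑ y, (∑ x, Amat π P y x * Real.sqrt (π x)) * h y := by
          refine Finset.sum_congr rfl fun y _ => ?_
          rw [Finset.sum_mul]
          refine Finset.sum_congr rfl fun x _ => ?_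
          rw [Amat_symm hπpos hrev y x]
          ring
      _ = ∑ y, Real.sqrt (π y) * h y := by
          refine Finset.sum_congr rfl fun y _ => ?_
          have := congrFun (Asp hπpos hPsum) y
          simp only [Matrix.mulVec, dotProduct] at this
          rw [this]
  have hsub : ∀ x, Real.sqrt (π x) * (h x - (Amat π P *ᵥ h) x)
      = Real.sqrt (π x) * h x - Real.sqrt (π x) * (Amat π P *ᵥ h) x := fun x => mul_sub _ _ _
  rw [Finset.sum_congr rfl fun x _ => hsub x, Finset.sum_sub_distrib, key, sub_self]

lemma wq_B (hπpos : ∀ x, 0 < π x) (hrev : ∀ x y, π x * P x y = π y * P y x)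
    (hA : (Amat π P).IsHermitian) (h : Fin n → ℝ) :
    wq hA (fun x => h x - (Amat π P *ᵥ h) x)
      = ∑ x, h x * (h x - (Amat π P *ᵥ h) x) := by
  have hcoef : ∀ m, coef hA (fun x => h x - (Amat π P *ᵥ h) x) m
      = (1 - hA.eigenvalues m) * coef hA h m := by
    intro m
    have : coef hA (fun x => h x - (Amat π P *ᵥ h) x) m
        = coef hA h m - coef hA (Amat π P *ᵥ h) m := by
      unfold coef
      rw [← Finset.sum_sub_distrib]
      exact Finset.sum_congr rfl fun x _ => by ring
    rw [this, coef_mulVec hπpos hrev hA h m]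
    ring
  have hrhs : ∑ x, h x * (h x - (Amat π P *ᵥ h) x)
      = ∑ m, ((coef hA h m) ^ 2 - hA.eigenvalues m * (coef hA h m) ^ 2) := by
    have h1 : ∑ x, h x * (h x - (Amat π P *ᵥ h) x)
        = (∑ x, h x * h x) - ∑ x, h x * (Amat π P *ᵥ h) x := by
      rw [← Finset.sum_sub_distrib]
      exact Finset.sum_congr rfl fun x _ => by ring
    rw [h1, pairing hA h h, pairing hA h (Amat π P *ᵥ h), ← Finset.sum_sub_distrib]
    refine Finset.sum_congr rfl fun m _ => ?_
    rw [coef_mulVec hπpos hrev hA h m]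
    ring
  rw [hrhs]
  unfold wq
  refine Finset.sum_congr rfl fun m _ => ?_
  rw [hcoef m]
  by_cases hm : hA.eigenvalues m = 1
  · simp [hm, tfun]
  · rw [tfun, if_neg hm]
    have hne : (1:ℝ) - hA.eigenvalues m ≠ 0 := sub_ne_zero.mpr (Ne.symm hm)
    field_simp

end chain

section twochain

variable {π : Fin n → ℝ} {P Q : Matrix (Fin n) (Fin n) ℝ}

lemma wq_mono [NeZero n] (hπpos : ∀ x, 0 < π x) (hπsum : ∑ x, π x = 1)
    (hPnn : ∀ x y, 0 ≤ P x y) (hPsum : ∀ x, ∑ y, P x y = 1) (hirrP : MatIrreducible P)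
    (hQnn : ∀ x y, 0 ≤ Q x y) (hQsum : ∀ x, ∑ y, Q x y = 1) (hirrQ : MatIrreducible Q)
    (hAP : (Amat π P).IsHermitian) (hAQ : (Amat π Q).IsHermitian)
    (hdom : ∀ (f : Fin n → ℝ) (vP vQ : ℝ),
      HasAsymptVar π P f vP → HasAsymptVar π Q f vQ → vP ≤ vQ)
    (g : Fin n → ℝ) (hg : ∑ x, Real.sqrt (π x) * g x = 0) :
    wq hAP g ≤ wq hAQ g := by
  set f : Fin n → ℝ := fun x => (Real.sqrt (π x))⁻¹ * g x with hf
  have hgv : gv π f = g := by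
    have hmean : ∑ z, π z * f z = 0 := by
      have hz : ∀ z : Fin n, π z * f z = Real.sqrt (π z) * g z := by
        intro z
        have h2 := sqsq hπpos z
        have hzne := (sqpos hπpos z).ne'
        rw [hf, ← h2]
        rw [Real.sqrt_mul_self (sqpos hπpos z).le]
        field_simp
      rw [Finset.sum_congr rfl fun z _ => hz z, hg]
    funext x
    unfold gv
    rw [hmean, sub_zero, hf]
    have hxne := (sqpos hπpos x).ne'
    field_simp
  have h1 := hasvar hπpos hπsum hPnn hPsum hirrP hAP f
  have h2 := hasvar hπpos hπsum hQnn hQsum hirrQ hAQ f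
  have h3 := hdom f _ _ h1 h2
  unfold vval at h3
  rw [hgv] at h3
  rw [vval_eq hπpos hPnn hPsum hirrP hAP hg,
    vval_eq hπpos hQnn hQsum hirrQ hAQ hg] at h3
  linarith

lemma quad_mono [NeZero n] (hπpos : ∀ x, 0 < π x) (hπsum : ∑ x, π x = 1)
    (hPnn : ∀ x y, 0 ≤ P x y) (hPsum : ∀ x, ∑ y, P x y = 1) (hirrP : MatIrreducible P)
    (hrevP : ∀ x y, π x * P x y = π y * P y x)
    (hQnn : ∀ x y, 0 ≤ Q x y) (hQsum : ∀ x, ∑ y, Q x y = 1) (hirrQ : MatIrreducible Q)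
    (hrevQ : ∀ x y, π x * Q x y = π y * Q y x)
    (hAP : (Amat π P).IsHermitian) (hAQ : (Amat π Q).IsHermitian)
    (hdom : ∀ (f : Fin n → ℝ) (vP vQ : ℝ),
      HasAsymptVar π P f vP → HasAsymptVar π Q f vQ → vP ≤ vQ)
    (h : Fin n → ℝ) :
    ∑ x, ∑ y, h x * Amat π P x y * h y ≤ ∑ x, ∑ y, h x * Amat π Q x y * h y := by
  set g : Fin n → ℝ := fun x => h x - (Amat π Q *ᵥ h) x with hgdef
  have hgperp : ∑ x, Real.sqrt (π x) * g x = 0 := B_perp hπpos hrevQ hQsum h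
  have h1 := var_ineq hπpos hPnn hPsum hirrP hAP h g hgperp
  have h2 := wq_mono hπpos hπsum hPnn hPsum hirrP hQnn hQsum hirrQ hAP hAQ hdom g hgperp
  have h3 : wq hAQ g = ∑ x, h x * g x := wq_B hπpos hrevQ hAQ h
  have h4 : ∑ x, h x * g x
      = (∑ x, h x * h x) - ∑ x, ∑ y, h x * Amat π Q x y * h y := by
    rw [← Finset.sum_sub_distrib]
    refine Finset.sum_congr rfl fun x _ => ?_
    rw [hgdef]
    show h x * (h x - (Amat π Q *ᵥ h) x) = h x * h x - ∑ y, h x * Amat π Q x y * h y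
    have : ∑ y, h x * Amat π Q x y * h y = h x * ∑ y, Amat π Q x y * h y := by
      rw [Finset.mul_sum]
      exact Finset.sum_congr rfl fun y _ => by ring
    rw [this]
    simp only [Matrix.mulVec, dotProduct]
    ring
  rw [h4] at h1 h3
  linarith

end twochain
end S14
end

theorem stmt14 {n : ℕ} (π : Fin n → ℝ) (P Q : Matrix (Fin n) (Fin n) ℝ)
    (hπpos : ∀ x, 0 < π x) (hπsum : ∑ x, π x = 1)
    (hP : IsStochastic P) (hQ : IsStochastic Q)
    (hirrP : MatIrreducible P) (hirrQ : MatIrreducible Q)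
    (hrevP : IsReversible π P) (hrevQ : IsReversible π Q)
    (hdom : EffDom π P Q) (hne : P ≠ Q) :
    P.trace < Q.trace := by
  rcases Nat.eq_zero_or_pos n with hn | hn
  · subst hn
    exact absurd (Subsingleton.elim P Q) hne
  haveI : NeZero n := ⟨hn.ne'⟩
  obtain ⟨hPnn, hPsum⟩ := hP
  obtain ⟨hQnn, hQsum⟩ := hQ
  have hAP := S14.Amat_herm (P := P) hπpos hrevP
  have hAQ := S14.Amat_herm (P := Q) hπpos hrevQ
  have key := S14.quad_mono hπpos hπsum hPnn hPsum hirrP hrevP hQnn hQsum hirrQ hrevQ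
    hAP hAQ hdom
  have hsingle : ∀ (M : Matrix (Fin n) (Fin n) ℝ) (x : Fin n),
      (∑ x', ∑ y', (Pi.single (M := fun _ => ℝ) x 1) x' * M x' y'
        * (Pi.single (M := fun _ => ℝ) x 1) y') = M x x := by
    intro M x
    simp [Pi.single_apply, ite_mul, zero_mul, mul_ite, mul_zero, Finset.sum_ite_eq]
  have hdiag : ∀ x, S14.Amat π P x x ≤ S14.Amat π Q x x := by
    intro x
    have hk := key (Pi.single (M := fun _ => ℝ) x 1)
    rwa [hsingle (S14.Amat π P) x, hsingle (S14.Amat π Q) x] at hk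
  have hAdiag : ∀ (M : Matrix (Fin n) (Fin n) ℝ) (x : Fin n), S14.Amat π M x x = M x x := by
    intro M x
    show Real.sqrt (π x) * M x x * (Real.sqrt (π x))⁻¹ = M x x
    have hx := (S14.sqpos hπpos x).ne'
    field_simp
  by_contra hlt
  push_neg at hlt
  have htr : ∑ x, (S14.Amat π Q x x - S14.Amat π P x x) = Q.trace - P.trace := by
    rw [Finset.sum_sub_distrib]
    have h1 : ∑ x, S14.Amat π Q x x = Q.trace := by
      rw [Matrix.trace]
      exact Finset.sum_congr rfl fun x _ => hAdiag Q x
    have h2 : ∑ x, S14.Amat π P x x = P.trace := by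
      rw [Matrix.trace]
      exact Finset.sum_congr rfl fun x _ => hAdiag P x
    rw [h1, h2]
  have hge : ∀ x, 0 ≤ S14.Amat π Q x x - S14.Amat π P x x :=
    fun x => sub_nonneg.mpr (hdiag x)
  have hsum0 : ∑ x, (S14.Amat π Q x x - S14.Amat π P x x) = 0 := by
    have hle2 : ∑ x, (S14.Amat π Q x x - S14.Amat π P x x) ≤ 0 := by
      rw [htr]; linarith
    exact le_antisymm hle2 (Finset.sum_nonneg fun x _ => hge x)
  have hdiageq : ∀ x, S14.Amat π Q x x = S14.Amat π P x x := by
    intro x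
    have := (Finset.sum_eq_zero_iff_of_nonneg fun x _ => hge x).mp hsum0 x (Finset.mem_univ x)
    linarith
  have hpair : ∀ (M : Matrix (Fin n) (Fin n) ℝ) (x y : Fin n), x ≠ y → ∀ t : ℝ,
      (∑ x', ∑ y', ((Pi.single (M := fun _ => ℝ) x 1) x' + (Pi.single (M := fun _ => ℝ) y t) x')
        * M x' y' * ((Pi.single (M := fun _ => ℝ) x 1) y' + (Pi.single (M := fun _ => ℝ) y t) y'))
      = M x x + t * M x y + t * M y x + t * t * M y y := by
    intro M x y hxy t
    simp [Pi.single_apply, ite_mul, zero_mul, mul_ite, mul_zero, add_mul, mul_add,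
      Finset.sum_add_distrib, Finset.sum_ite_eq, hxy, hxy.symm]
    ring
  have hoff : ∀ x y, S14.Amat π P x y = S14.Amat π Q x y := by
    intro x y
    by_cases hxy : x = y
    · rw [hxy]; exact (hdiageq y).symm
    · have k1 := key (Pi.single (M := fun _ => ℝ) x 1 + Pi.single (M := fun _ => ℝ) y 1)
      have k2 := key (Pi.single (M := fun _ => ℝ) x 1 + Pi.single (M := fun _ => ℝ) y (-1))
      simp only [Pi.add_apply] at k1 k2
      rw [hpair (S14.Amat π P) x y hxy 1, hpair (S14.Amat π Q) x y hxy 1] at k1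
      rw [hpair (S14.Amat π P) x y hxy (-1), hpair (S14.Amat π Q) x y hxy (-1)] at k2
      have hsymP := S14.Amat_symm hπpos hrevP x y
      have hsymQ := S14.Amat_symm hπpos hrevQ x y
      have hdx := hdiageq x
      have hdy := hdiageq y
      linarith
  have hPQ : P = Q := by
    ext x y
    have h := hoff x y
    rw [S14.Amat_eq hπpos, S14.Amat_eq hπpos] at h
    have hx := (S14.sqpos hπpos x).ne'
    have hy := (S14.sqpos hπpos y).ne'
    have hπx := (hπpos x).ne'
    field_simp at h
    linarith
  exact hne hPQ
end
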